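/- arXiv:2605.20486 — 5 statements merged into one kernel-verified Lean document; each statement's English description precedes it below -/
import Mathlib

section
/- (Determination Theorem) Let (X,d) be a compact metric space and let u₁, u₂ : X → ℝ be continuous functions such that s[u₁](x) = s[u₂](x) < +∞ for all x ∈ X, and such that u₁(x) = u₂(x) for every x ∈ X with s[u₁](x) = s[u₂](x) = 0. Then u₁ = u₂. -/
open Filter Topology Set MeasureTheory
open scoped ENNReal NNReal

/-- The local (descent) slope of `u` at `x`, relative to the ambient set `A`. -/
noncomputable def locSlopeOn {X : Type*} [PseudoMetricSpace X] (u : X → ℝ) (A : Set X) (x : X) :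
    ℝ≥0∞ :=
  Filter.limsup (fun y => ENNReal.ofReal (max (u x - u y) 0 / dist x y)) (𝓝[A \ {x}] x)

/-- The local (descent) slope of `u` at `x`. -/
noncomputable def locSlope {X : Type*} [PseudoMetricSpace X] (u : X → ℝ) (x : X) : ℝ≥0∞ :=
  locSlopeOn u Set.univ x

/-- The intrinsic (length) distance between two points. -/
noncomputable def intrinsicDist {X : Type*} [PseudoMetricSpace X] (x y : X) : ℝ≥0∞ :=
  ⨅ (T : ℝ) (_ : 0 ≤ T) (γ : ℝ → X) (_ : ContinuousOn γ (Set.Icc 0 T))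
    (_ : γ 0 = x) (_ : γ T = y), eVariationOn γ (Set.Icc 0 T)

/-- Compatibility condition (CC). -/
def SatisfiesCC {X : Type*} [PseudoMetricSpace X] (Ω : Set X) (ℓ g : X → ℝ) : Prop :=
  ∀ x ∈ frontier Ω, ∀ y ∈ frontier Ω, ∀ T > (0:ℝ), ∀ γ : ℝ → X,
    LipschitzOnWith 1 γ (Set.Icc 0 T) → Set.MapsTo γ (Set.Icc 0 T) (closure Ω) →
    γ 0 = y → γ T = x → Set.MapsTo γ (Set.Ioo 0 T) Ω →
    g x - g y ≤ ∫ t in (0:ℝ)..T, ℓ (γ t)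

/-- Continuous pointwise solution of the slope eikonal equation. -/
def IsEikonalSol {X : Type*} [PseudoMetricSpace X] (Ω : Set X) (ℓ g u : X → ℝ) : Prop :=
  ContinuousOn u (closure Ω) ∧
  (∀ x ∈ Ω, locSlopeOn u (closure Ω) x = ENNReal.ofReal (ℓ x)) ∧
  ∀ x ∈ frontier Ω, u x = g x

/-- Eikonal space. -/
def IsEikonalSpace (X : Type*) [MetricSpace X] : Prop :=
  ∀ Ω : Set X, IsOpen Ω → Ω.Nonempty → Ω ≠ Set.univ →
    ∀ ℓ g : X → ℝ, ContinuousOn ℓ Ω → (∃ M, ∀ x ∈ Ω, |ℓ x| ≤ M) →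
      (∃ c > 0, ∀ x ∈ Ω, c ≤ ℓ x) → ContinuousOn g (frontier Ω) →
      SatisfiesCC Ω ℓ g → ∃ u : X → ℝ, IsEikonalSol Ω ℓ g u

/-- The `E_{1,0}` property. -/
def HasE10 (X : Type*) [MetricSpace X] : Prop :=
  ∀ K : Set X, IsClosed K → K.Nonempty →
    ∃ u : X → ℝ, Continuous u ∧ (∀ x ∉ K, locSlope u x = 1) ∧ ∀ x ∈ K, u x = 0


private lemma locSlope_eq_nhdsNE {X : Type*} [PseudoMetricSpace X] (u : X → ℝ) (x : X) :
    locSlope u x =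
      Filter.limsup (fun y => ENNReal.ofReal (max (u x - u y) 0 / dist x y)) (𝓝[≠] x) := by
  rw [locSlope, locSlopeOn, ← Set.compl_eq_univ_diff]

private lemma step_lemma {X : Type*} [MetricSpace X] (u₁ u₂ : X → ℝ) (c : ℝ) (hc : 0 < c)
    (m : X) (hσ0 : locSlope u₁ m ≠ 0) (hσt : locSlope u₁ m ≠ ⊤)
    (heq : locSlope u₂ m = locSlope u₁ m) :
    ∃ y, u₂ y < u₂ m ∧ u₁ m - (1 + c) * u₂ m ≤ u₁ y - (1 + c) * u₂ y := by
  set s := (locSlope u₁ m).toReal with hsdef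
  have hspos : 0 < s := ENNReal.toReal_pos hσ0 hσt
  have hσofReal : locSlope u₁ m = ENNReal.ofReal s := (ENNReal.ofReal_toReal hσt).symm
  set ε := min (1 / 2 : ℝ) (c / 4) with hεdef
  have hε0 : 0 < ε := lt_min (by norm_num) (by linarith)
  have hε2 : ε ≤ 1 / 2 := min_le_left _ _
  have hεc : 4 * ε ≤ c := by
    have := min_le_right (1 / 2 : ℝ) (c / 4); linarith
  haveI hne : (𝓝[≠] m).NeBot := by
    by_contra h
    rw [neBot_iff, ne_eq, not_not] at h
    apply hσ0
    rw [locSlope_eq_nhdsNE, h, Filter.limsup_bot]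
    rfl
  have hlt : locSlope u₁ m < ENNReal.ofReal (s * (1 + ε)) := by
    rw [hσofReal]
    exact (ENNReal.ofReal_lt_ofReal_iff (by positivity)).mpr (by nlinarith)
  have hgt : ENNReal.ofReal (s * (1 - ε)) < locSlope u₂ m := by
    rw [heq, hσofReal]
    exact (ENNReal.ofReal_lt_ofReal_iff hspos).mpr (by nlinarith)
  have hlt' : Filter.limsup (fun y => ENNReal.ofReal (max (u₁ m - u₁ y) 0 / dist m y))
      (𝓝[≠] m) < ENNReal.ofReal (s * (1 + ε)) := by
    rw [← locSlope_eq_nhdsNE]; exact hlt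
  have hgt' : ENNReal.ofReal (s * (1 - ε)) <
      Filter.limsup (fun y => ENNReal.ofReal (max (u₂ m - u₂ y) 0 / dist m y)) (𝓝[≠] m) := by
    rw [← locSlope_eq_nhdsNE]; exact hgt
  have ev : ∀ᶠ y in 𝓝[≠] m,
      ENNReal.ofReal (max (u₁ m - u₁ y) 0 / dist m y) < ENNReal.ofReal (s * (1 + ε)) :=
    Filter.eventually_lt_of_limsup_lt hlt'
  have fr : ∃ᶠ y in 𝓝[≠] m,
      ENNReal.ofReal (s * (1 - ε)) < ENNReal.ofReal (max (u₂ m - u₂ y) 0 / dist m y) :=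
    Filter.frequently_lt_of_lt_limsup (h := hgt')
  have evne : ∀ᶠ y in 𝓝[≠] m, y ≠ m :=
    eventually_mem_nhdsWithin.mono fun y hy => hy
  obtain ⟨y, h2, h1, hyne⟩ := (fr.and_eventually (ev.and evne)).exists
  have hd : 0 < dist m y := dist_pos.mpr (Ne.symm hyne)
  have h1' : u₁ m - u₁ y < s * (1 + ε) * dist m y := by
    have h1r := (ENNReal.ofReal_lt_ofReal_iff (by positivity)).mp h1
    rw [div_lt_iff₀ hd] at h1r
    have := le_max_left (u₁ m - u₁ y) 0
    linarith
  have h2' : s * (1 - ε) * dist m y < u₂ m - u₂ y := by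
    have h2r := (ENNReal.ofReal_lt_ofReal_iff_of_nonneg (by nlinarith)).mp h2
    rw [lt_div_iff₀ hd] at h2r
    rcases max_cases (u₂ m - u₂ y) 0 with ⟨hmax, _⟩ | ⟨hmax, _⟩
    · rwa [hmax] at h2r
    · rw [hmax] at h2r
      nlinarith [mul_pos (mul_pos hspos (by linarith : (0:ℝ) < 1 - ε)) hd]
  refine ⟨y, by nlinarith [mul_pos (mul_pos hspos (by linarith : (0:ℝ) < 1 - ε)) hd], ?_⟩
  nlinarith [mul_pos hspos hd, mul_pos (mul_pos hε0 hspos) hd,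
    mul_le_mul_of_nonneg_right hεc (mul_pos hspos hd).le]

private lemma key_le {X : Type*} [MetricSpace X] [CompactSpace X] (u₁ u₂ : X → ℝ)
    (hc₁ : Continuous u₁) (hc₂ : Continuous u₂)
    (hs : ∀ x, locSlope u₁ x = locSlope u₂ x)
    (hfin : ∀ x, locSlope u₁ x ≠ ⊤)
    (h0 : ∀ x, locSlope u₁ x = 0 → u₁ x = u₂ x) :
    ∀ x, u₁ x ≤ u₂ x := by
  intro x₀
  by_contra hcon
  push_neg at hcon
  have hΔ0 : 0 < u₁ x₀ - u₂ x₀ := by linarith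
  obtain ⟨a, -, ha'⟩ := isCompact_univ.exists_isMinOn ⟨x₀, Set.mem_univ _⟩ hc₂.continuousOn
  obtain ⟨b, -, hb'⟩ := isCompact_univ.exists_isMaxOn ⟨x₀, Set.mem_univ _⟩ hc₂.continuousOn
  have ha : ∀ z : X, u₂ a ≤ u₂ z := fun z => isMinOn_iff.mp ha' z (Set.mem_univ z)
  have hb : ∀ z : X, u₂ z ≤ u₂ b := fun z => isMaxOn_iff.mp hb' z (Set.mem_univ z)
  have hR0 : 0 ≤ u₂ b - u₂ a := by linarith [ha b]
  set R := u₂ b - u₂ a with hRdef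
  set c := (u₁ x₀ - u₂ x₀) / (R + 1) with hcdef
  have hc0 : 0 < c := div_pos hΔ0 (by linarith)
  have hcR : c * (R + 1) = u₁ x₀ - u₂ x₀ := div_mul_cancel₀ _ (by linarith)
  set ψ : X → ℝ := fun x => u₁ x - (1 + c) * u₂ x with hψdef
  have hψcont : Continuous ψ := hc₁.sub (continuous_const.mul hc₂)
  set r : X → X → Prop := fun x y => u₂ y ≤ u₂ x ∧ ψ x ≤ ψ y with hrdef
  have hrefl : ∀ x, r x x := fun x => ⟨le_rfl, le_rfl⟩
  have htrans : ∀ x y z, r x y → r y z → r x z :=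
    fun x y z h1 h2 => ⟨h2.1.trans h1.1, h1.2.trans h2.2⟩
  have hbdd : ∀ x : X, BddBelow (u₂ '' {z | r x z}) := by
    intro x
    exact ⟨u₂ a, by rintro t ⟨z, -, rfl⟩; exact ha z⟩
  have hexist : ∀ (x : X) (n : ℕ),
      ∃ y, r x y ∧ u₂ y ≤ sInf (u₂ '' {z | r x z}) + (1 / 2) ^ n := by
    intro x n
    have hne : (u₂ '' {z | r x z}).Nonempty := ⟨u₂ x, x, hrefl x, rfl⟩
    have hlt : sInf (u₂ '' {z | r x z}) < sInf (u₂ '' {z | r x z}) + (1 / 2) ^ n := by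
      have : (0 : ℝ) < (1 / 2) ^ n := by positivity
      linarith
    obtain ⟨t, ⟨y, hy, rfl⟩, ht⟩ := exists_lt_of_csInf_lt hne hlt
    exact ⟨y, hy, ht.le⟩
  obtain ⟨seq, hseq0, hseqS⟩ : ∃ seq : ℕ → X, seq 0 = x₀ ∧
      ∀ n, seq (n + 1) = Classical.choose (hexist (seq n) n) :=
    ⟨fun n => Nat.rec x₀ (fun n ih => Classical.choose (hexist ih n)) n, rfl, fun n => rfl⟩
  have hstep : ∀ n, r (seq n) (seq (n + 1)) ∧
      u₂ (seq (n + 1)) ≤ sInf (u₂ '' {z | r (seq n) z}) + (1 / 2) ^ n := by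
    intro n; rw [hseqS n]; exact Classical.choose_spec (hexist (seq n) n)
  have hchain : ∀ n m : ℕ, n ≤ m → r (seq n) (seq m) := by
    intro n m hnm
    induction m with
    | zero => obtain rfl := Nat.le_zero.mp hnm; exact hrefl _
    | succ m ih =>
      rcases Nat.lt_or_ge n (m + 1) with h | h
      · exact htrans _ _ _ (ih (Nat.lt_succ_iff.mp h)) (hstep m).1
      · have : n = m + 1 := le_antisymm hnm h
        rw [this]; exact hrefl _
  obtain ⟨x', -, φ, hφ, hlim⟩ := isCompact_univ.tendsto_subseq (fun n => Set.mem_univ (seq n))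
  have hrx : ∀ n, r (seq n) x' := by
    intro n
    have h1 : Filter.Tendsto (fun j => u₂ (seq (φ j))) atTop (𝓝 (u₂ x')) :=
      (hc₂.tendsto x').comp hlim
    have h2 : Filter.Tendsto (fun j => ψ (seq (φ j))) atTop (𝓝 (ψ x')) :=
      (hψcont.tendsto x').comp hlim
    constructor
    · refine le_of_tendsto h1 ?_
      filter_upwards [Filter.eventually_ge_atTop n] with j hj
      exact (hchain n (φ j) (hj.trans (hφ.le_apply))).1
    · refine ge_of_tendsto h2 ?_
      filter_upwards [Filter.eventually_ge_atTop n] with j hj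
      exact (hchain n (φ j) (hj.trans (hφ.le_apply))).2
  have hmaxi : ∀ y, r x' y → u₂ x' ≤ u₂ y := by
    intro y hy
    have hkey : ∀ n : ℕ, u₂ x' ≤ u₂ y + (1 / 2) ^ n := by
      intro n
      have h1 : u₂ x' ≤ u₂ (seq (n + 1)) := (hrx (n + 1)).1
      have h2 : sInf (u₂ '' {z | r (seq n) z}) ≤ u₂ y :=
        csInf_le (hbdd _) ⟨y, htrans _ _ _ (hrx n) hy, rfl⟩
      linarith [(hstep n).2]
    have hlim2 : Filter.Tendsto (fun n : ℕ => u₂ y + (1 / 2 : ℝ) ^ n) atTop (𝓝 (u₂ y)) := by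
      have h := tendsto_pow_atTop_nhds_zero_of_lt_one
        (by norm_num : (0:ℝ) ≤ 1 / 2) (by norm_num : (1 / 2 : ℝ) < 1)
      simpa using tendsto_const_nhds.add h
    exact ge_of_tendsto hlim2 (Filter.Eventually.of_forall hkey)
  have hinv : ψ x₀ ≤ ψ x' := by
    have := (hrx 0).2; rwa [hseq0] at this
  have hfx : 0 < u₁ x' - u₂ x' := by
    have hb1 : -R ≤ u₂ x' - u₂ x₀ := by
      have := hb x₀; have := ha x'; simp only [hRdef]; linarith
    have hψexp : u₁ x₀ - (1 + c) * u₂ x₀ ≤ u₁ x' - (1 + c) * u₂ x' := hinv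
    nlinarith [mul_le_mul_of_nonneg_left hb1 hc0.le]
  rcases eq_or_ne (locSlope u₁ x') 0 with h | h
  · have := h0 x' h; linarith
  · obtain ⟨y, hy1, hy2⟩ := step_lemma u₁ u₂ c hc0 x' h (hfin x') (hs x').symm
    have := hmaxi y ⟨hy1.le, hy2⟩
    linarith

/-- **Determination Theorem.** -/
theorem stmt2 {X : Type*} [MetricSpace X] [CompactSpace X] (u₁ u₂ : X → ℝ)
    (hc₁ : Continuous u₁) (hc₂ : Continuous u₂)
    (hs : ∀ x, locSlope u₁ x = locSlope u₂ x)
    (hfin : ∀ x, locSlope u₁ x ≠ ⊤)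
    (h0 : ∀ x, locSlope u₁ x = 0 → u₁ x = u₂ x) :
    u₁ = u₂ := by
  funext x
  have h1 := key_le u₁ u₂ hc₁ hc₂ hs hfin h0 x
  have h2 := key_le u₂ u₁ hc₂ hc₁ (fun y => (hs y).symm)
    (fun y => by rw [← hs y]; exact hfin y)
    (fun y hy => (h0 y ((hs y).trans hy)).symm) x
  exact le_antisymm h1 h2
end

section
/- Let X = [0,1] be endowed with the snowflake metric d(x,y) = √|x−y|, let 0 < a < b < 1, and define ψ : [0,1] → ℝ by ψ(x) = x−a for x ∈ [a,(a+b)/2], ψ(x) = b−x for x ∈ [(a+b)/2, b], and ψ(x) = 0 otherwise. Then ψ is continuous and s[ψ](x) = 0 for every x ∈ [0,1]; in particular ψ is a nonconstant function with zero local slope everywhere on ([0,1], d). -/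
open Filter Topology Set MeasureTheory
open scoped ENNReal NNReal

/-- The unit interval, to be endowed with the snowflake metric `d(x,y) = √|x-y|`. -/
structure Snow : Type where
  val : ℝ
  mem : val ∈ Set.Icc (0:ℝ) 1

private theorem sqrt_subadd {a b : ℝ} (ha : 0 ≤ a) (hb : 0 ≤ b) :
    Real.sqrt (a + b) ≤ Real.sqrt a + Real.sqrt b := by
  have sa := Real.sq_sqrt ha
  have sb := Real.sq_sqrt hb
  have na := Real.sqrt_nonneg a
  have nb := Real.sqrt_nonneg b
  have h2 : a + b ≤ (Real.sqrt a + Real.sqrt b) ^ 2 := by nlinarith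
  calc Real.sqrt (a + b) ≤ Real.sqrt ((Real.sqrt a + Real.sqrt b) ^ 2) :=
        Real.sqrt_le_sqrt h2
    _ = Real.sqrt a + Real.sqrt b := Real.sqrt_sq (by positivity)

/-- The snowflake metric `d(x,y) = √|x - y|` on `[0,1]`. -/
noncomputable instance : MetricSpace Snow where
  dist x y := Real.sqrt |x.val - y.val|
  dist_self x := by simp
  dist_comm x y := by (try simp only); rw [abs_sub_comm]
  dist_triangle x y z := by
    try simp only
    calc Real.sqrt |x.val - z.val| ≤ Real.sqrt (|x.val - y.val| + |y.val - z.val|) :=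
          Real.sqrt_le_sqrt (abs_sub_le _ _ _)
      _ ≤ Real.sqrt |x.val - y.val| + Real.sqrt |y.val - z.val| :=
          sqrt_subadd (abs_nonneg _) (abs_nonneg _)
  eq_of_dist_eq_zero := by
    intro x y h
    try simp only at h
    have h0 : |x.val - y.val| = 0 := by
      have := Real.sqrt_eq_zero (abs_nonneg _) |>.mp h
      exact this
    cases x; cases y
    simp only [abs_eq_zero, sub_eq_zero] at h0
    simpa using h0

/-- The piecewise tent function `ψ`. -/
noncomputable def psi (a b : ℝ) (x : Snow) : ℝ :=
  if x.val ∈ Set.Icc a ((a + b) / 2) then x.val - a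
  else if x.val ∈ Set.Icc ((a + b) / 2) b then b - x.val
  else 0


lemma psi_eq {a b : ℝ} (hab : a < b) (x : Snow) :
    psi a b x = max 0 (min (x.val - a) (b - x.val)) := by
  unfold psi
  simp only [Set.mem_Icc]
  split_ifs with h1 h2
  · rw [min_eq_left (by linarith [h1.1, h1.2]), max_eq_right (by linarith [h1.1])]
  · rw [min_eq_right (by linarith [h2.1]), max_eq_right (by linarith [h2.2])]
  · push_neg at h1 h2
    have hmin : min (x.val - a) (b - x.val) ≤ 0 := by
      rcases le_or_gt a x.val with h | h
      · have h3 := h1 h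
        have h4 := h2 h3.le
        calc min (x.val - a) (b - x.val) ≤ b - x.val := min_le_right _ _
          _ ≤ 0 := by linarith
      · calc min (x.val - a) (b - x.val) ≤ x.val - a := min_le_left _ _
          _ ≤ 0 := by linarith
    rw [max_eq_left hmin]

lemma psi_lip {a b : ℝ} (hab : a < b) (x y : Snow) :
    |psi a b x - psi a b y| ≤ |x.val - y.val| := by
  rw [psi_eq hab, psi_eq hab]
  have h1 := abs_max_sub_max_le_max 0 (min (x.val - a) (b - x.val)) 0
    (min (y.val - a) (b - y.val))
  have h2 := abs_min_sub_min_le_max (x.val - a) (b - x.val) (y.val - a) (b - y.val)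
  simp only [sub_self, abs_zero] at h1
  have e1 : x.val - a - (y.val - a) = x.val - y.val := by ring
  have e2 : b - x.val - (b - y.val) = y.val - x.val := by ring
  rw [e1, e2, abs_sub_comm y.val x.val, max_self] at h2
  calc |max 0 (min (x.val - a) (b - x.val)) - max 0 (min (y.val - a) (b - y.val))|
      ≤ max 0 |min (x.val - a) (b - x.val) - min (y.val - a) (b - y.val)| := h1
    _ = |min (x.val - a) (b - x.val) - min (y.val - a) (b - y.val)| :=
        max_eq_right (abs_nonneg _)
    _ ≤ |x.val - y.val| := h2

lemma snow_dist (x y : Snow) : dist x y = Real.sqrt |x.val - y.val| := rfl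

/-- On the snowflaked interval, the tent function `ψ` is continuous,
nonconstant, and has zero local slope everywhere. -/
theorem stmt4 (a b : ℝ) (ha : 0 < a) (hab : a < b) (hb : b < 1) :
    Continuous (psi a b) ∧ (∀ x : Snow, locSlope (psi a b) x = 0) ∧
      ∃ x y : Snow, psi a b x ≠ psi a b y := by

  constructor
  · -- continuity
    refine (LipschitzWith.of_dist_le_mul (K := 1) fun x y => ?_).continuous
    simp only [NNReal.coe_one, one_mul]
    rw [Real.dist_eq, snow_dist]
    have hle : |x.val - y.val| ≤ 1 := by
      rw [abs_le]
      constructor <;> [linarith [x.mem.1, y.mem.2]; linarith [x.mem.2, y.mem.1]]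
    calc |psi a b x - psi a b y| ≤ |x.val - y.val| := psi_lip hab x y
      _ = Real.sqrt (|x.val - y.val| ^ 2) := (Real.sqrt_sq (abs_nonneg _)).symm
      _ ≤ Real.sqrt |x.val - y.val| := Real.sqrt_le_sqrt (by nlinarith [abs_nonneg (x.val - y.val)])
  constructor
  · -- zero slope
    intro x
    unfold locSlope locSlopeOn
    refine le_antisymm ?_ zero_le
    refine ENNReal.le_of_forall_pos_le_add fun ε hε _ => ?_
    rw [zero_add]
    refine Filter.limsup_le_of_le ⟨⊥, fun c _ => bot_le⟩ ?_
    have hball : Metric.ball x (ε : ℝ) ∈ 𝓝[Set.univ \ {x}] x :=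
      nhdsWithin_le_nhds (Metric.ball_mem_nhds x (by exact_mod_cast hε))
    filter_upwards [hball, self_mem_nhdsWithin] with y hy hyx
    have hne : x ≠ y := fun h => hyx.2 (by simp [h])
    have hD : 0 < dist x y := dist_pos.mpr hne
    have hsq : dist x y * dist x y = |x.val - y.val| := by
      rw [snow_dist]; exact Real.mul_self_sqrt (abs_nonneg _)
    have hm : max (psi a b x - psi a b y) 0 ≤ dist x y * dist x y := by
      rw [hsq]
      exact max_le ((le_abs_self _).trans (psi_lip hab x y)) (abs_nonneg _)
    have hdiv : max (psi a b x - psi a b y) 0 / dist x y ≤ dist x y :=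
      (div_le_iff₀ hD).mpr (by simpa using hm)
    have hye : dist x y < (ε : ℝ) := by rw [dist_comm]; exact Metric.mem_ball.mp hy
    calc ENNReal.ofReal (max (psi a b x - psi a b y) 0 / dist x y)
        ≤ ENNReal.ofReal (ε : ℝ) := ENNReal.ofReal_le_ofReal (hdiv.trans hye.le)
      _ = (ε : ℝ≥0∞) := ENNReal.ofReal_coe_nnreal
  · -- nonconstant
    refine ⟨⟨(a + b) / 2, ⟨by linarith, by linarith⟩⟩, ⟨0, ⟨le_refl 0, by linarith⟩⟩, ?_⟩
    simp only [psi, Set.mem_Icc]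
    rw [if_pos ⟨by linarith, le_refl _⟩, if_neg (by push_neg; intro h; linarith),
      if_neg (by push_neg; intro h; linarith)]
    intro h
    have : b - a = 0 := by linarith
    linarith
end

section
/- (Dynamic Programming Principle) Let (X,d) be a metric space and let Ω ⊂ X be an open set with ∂Ω ≠ ∅. Let ℓ : Ω → ℝ be continuous with ℓ > 0 on Ω and let g : ∂Ω → ℝ be continuous. Assume that the value function V : Ω → ℝ defined by V(x) := inf{∫_0^T ℓ(γ(s))ds + g(γ(T)) : T > 0, γ : [0,T] → cl(Ω) is 1-Lipschitz, γ(0)=x, γ(T) ∈ ∂Ω, γ([0,T)) ⊂ Ω} is finite at every point of Ω. Then for all x ∈ Ω, V(x) = inf{∫_0^T ℓ(γ(s))ds + V(γ(T)) : T > 0, γ : [0,T] → Ω is 1-Lipschitz, γ(0) = x}. -/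
open Filter Topology Set MeasureTheory
open scoped ENNReal NNReal

/-- The set of admissible costs defining the value function `V`. -/
def costSetA {X : Type*} [PseudoMetricSpace X] (Ω : Set X) (ℓ g : X → ℝ) (x : X) : Set ℝ :=
  {v | ∃ T > (0:ℝ), ∃ γ : ℝ → X, LipschitzOnWith 1 γ (Set.Icc 0 T) ∧
      Set.MapsTo γ (Set.Icc 0 T) (closure Ω) ∧ γ 0 = x ∧ γ T ∈ frontier Ω ∧
      Set.MapsTo γ (Set.Ico 0 T) Ω ∧ v = (∫ t in (0:ℝ)..T, ℓ (γ t)) + g (γ T)}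

/-- The set of costs appearing in the dynamic programming principle. -/
def costSetB {X : Type*} [PseudoMetricSpace X] (Ω : Set X) (ℓ V : X → ℝ) (x : X) : Set ℝ :=
  {v | ∃ T > (0:ℝ), ∃ γ : ℝ → X, LipschitzOnWith 1 γ (Set.Icc 0 T) ∧
      Set.MapsTo γ (Set.Icc 0 T) Ω ∧ γ 0 = x ∧
      v = (∫ t in (0:ℝ)..T, ℓ (γ t)) + V (γ T)}


private lemma iiCongr {f g : ℝ → ℝ} {a b : ℝ} (h : Set.EqOn f g (Set.uIcc a b))
    (hf : IntervalIntegrable f volume a b) : IntervalIntegrable g volume a b :=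
  hf.congr_ae ((ae_restrict_mem measurableSet_uIoc).mono fun x hx => h (Set.uIoc_subset_uIcc hx))

private lemma concat_lip {X : Type*} [MetricSpace X] {γ σ : ℝ → X} {T S : ℝ}
    (hT : 0 ≤ T) (hS : 0 ≤ S)
    (hγ : LipschitzOnWith 1 γ (Set.Icc 0 T)) (hσ : LipschitzOnWith 1 σ (Set.Icc 0 S))
    (hm : σ 0 = γ T) :
    LipschitzOnWith 1 (fun t => if t ≤ T then γ t else σ (t - T)) (Set.Icc 0 (T + S)) := by
  rw [lipschitzOnWith_iff_dist_le_mul] at hγ hσ ⊢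
  have key : ∀ s ∈ Icc 0 (T + S), ∀ t ∈ Icc 0 (T + S), s ≤ t →
      dist ((fun t => if t ≤ T then γ t else σ (t - T)) s)
        ((fun t => if t ≤ T then γ t else σ (t - T)) t) ≤ t - s := by
    intro s hs t ht hst
    simp only
    by_cases h1 : t ≤ T
    · have h0 : s ≤ T := hst.trans h1
      rw [if_pos h0, if_pos h1]
      have := hγ s ⟨hs.1, h0⟩ t ⟨ht.1, h1⟩
      rw [Real.dist_eq, abs_of_nonpos (by linarith)] at this
      push_cast at this; linarith
    · push_neg at h1
      by_cases h0 : s ≤ T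
      · rw [if_pos h0, if_neg (not_le.2 h1)]
        have hA := hγ s ⟨hs.1, h0⟩ T ⟨hT, le_refl T⟩
        have hB := hσ 0 ⟨le_refl 0, hS⟩ (t - T) ⟨by linarith, by linarith [ht.2]⟩
        rw [Real.dist_eq, abs_of_nonpos (by linarith)] at hA
        rw [Real.dist_eq, abs_of_nonpos (by linarith)] at hB
        rw [hm] at hB
        push_cast at hA hB
        calc dist (γ s) (σ (t - T)) ≤ dist (γ s) (γ T) + dist (γ T) (σ (t - T)) :=
              dist_triangle _ _ _
          _ ≤ t - s := by linarith
      · push_neg at h0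
        rw [if_neg (not_le.2 h0), if_neg (not_le.2 h1)]
        have := hσ (s - T) ⟨by linarith, by linarith [hs.2]⟩ (t - T)
          ⟨by linarith, by linarith [ht.2]⟩
        rw [Real.dist_eq, abs_of_nonpos (by linarith)] at this
        push_cast at this; linarith
  intro s hs t ht
  push_cast
  rw [Real.dist_eq (x := s)]
  rcases le_total s t with h | h
  · rw [abs_of_nonpos (by linarith)]
    have := key s hs t ht h
    simp only at this; linarith
  · rw [dist_comm, abs_of_nonneg (by linarith)]
    have := key t ht s hs h
    simp only at this; linarith

private lemma tailLip {X : Type*} [MetricSpace X] {γ : ℝ → X} {T t : ℝ}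
    (hγ : LipschitzOnWith 1 γ (Set.Icc 0 T)) (ht : 0 ≤ t) (ht' : t ≤ T) :
    LipschitzOnWith 1 (fun s => γ (s + t)) (Set.Icc 0 (T - t)) := by
  rw [lipschitzOnWith_iff_dist_le_mul] at hγ ⊢
  intro a ha c hc
  have := hγ (a + t) ⟨by linarith [ha.1], by linarith [ha.2]⟩ (c + t)
    ⟨by linarith [hc.1], by linarith [hc.2]⟩
  simpa [Real.dist_eq, add_sub_add_right_eq_sub] using this

/-- **Dynamic Programming Principle.** -/
theorem stmt6 {X : Type*} [MetricSpace X] (Ω : Set X) (hΩ : IsOpen Ω)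
    (hfr : (frontier Ω).Nonempty) (ℓ g : X → ℝ) (hℓ : ContinuousOn ℓ Ω)
    (hpos : ∀ x ∈ Ω, 0 < ℓ x) (hg : ContinuousOn g (frontier Ω))
    (hfin : ∀ x ∈ Ω, (costSetA Ω ℓ g x).Nonempty ∧ BddBelow (costSetA Ω ℓ g x)) :
    ∀ x ∈ Ω,
      IsGLB (costSetB Ω ℓ (fun y => sInf (costSetA Ω ℓ g y)) x) (sInf (costSetA Ω ℓ g x)) := by
  intro x hx
  constructor
  · -- lower bound
    rintro v ⟨T, hT, γ, hγlip, hγmaps, hγ0, rfl⟩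
    show sInf (costSetA Ω ℓ g x) ≤ (∫ t in (0:ℝ)..T, ℓ (γ t)) + sInf (costSetA Ω ℓ g (γ T))
    have hγT : γ T ∈ Ω := hγmaps ⟨hT.le, le_refl T⟩
    have hγcont : ContinuousOn (fun t => ℓ (γ t)) (Set.Icc 0 T) :=
      hℓ.comp hγlip.continuousOn hγmaps
    have hγint : IntervalIntegrable (fun t => ℓ (γ t)) volume 0 T :=
      (show ContinuousOn _ (Set.uIcc 0 T) by
        rw [Set.uIcc_of_le hT.le]; exact hγcont).intervalIntegrable
    have hγnn : 0 ≤ ∫ t in (0:ℝ)..T, ℓ (γ t) :=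
      intervalIntegral.integral_nonneg hT.le fun u hu => (hpos _ (hγmaps hu)).le
    have key : ∀ w ∈ costSetA Ω ℓ g (γ T),
        sInf (costSetA Ω ℓ g x) ≤ (∫ t in (0:ℝ)..T, ℓ (γ t)) + w := by
      rintro w ⟨S, hS, σ, hσlip, hσmaps, hσ0, hσS, hσIco, rfl⟩
      set η : ℝ → X := fun t => if t ≤ T then γ t else σ (t - T) with hηdef
      have hηlip : LipschitzOnWith 1 η (Set.Icc 0 (T + S)) :=
        concat_lip hT.le hS.le hγlip hσlip hσ0
      have hηmaps : Set.MapsTo η (Set.Icc 0 (T + S)) (closure Ω) := by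
        intro t ht
        by_cases h : t ≤ T
        · simpa [hηdef, h] using subset_closure (hγmaps ⟨ht.1, h⟩)
        · push_neg at h
          simpa [hηdef, not_le.2 h] using hσmaps ⟨by linarith, by linarith [ht.2]⟩
      have hη0 : η 0 = x := by simp [hηdef, hT.le, hγ0]
      have hηT : η (T + S) = σ S := by
        simp only [hηdef]
        rw [if_neg (by linarith), add_sub_cancel_left]
      have hηfr : η (T + S) ∈ frontier Ω := by rw [hηT]; exact hσS
      have hηIco : Set.MapsTo η (Set.Ico 0 (T + S)) Ω := by
        intro t ht
        by_cases h : t ≤ T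
        · simpa [hηdef, h] using hγmaps ⟨ht.1, h⟩
        · push_neg at h
          simpa [hηdef, not_le.2 h] using hσIco ⟨by linarith, by linarith [ht.2]⟩
      have hEq1 : Set.EqOn (fun t => ℓ (η t)) (fun t => ℓ (γ t)) (Set.uIcc 0 T) := by
        intro t ht
        rw [Set.uIcc_of_le hT.le] at ht
        simp [hηdef, ht.2]
      have hEq2 : Set.EqOn (fun t => ℓ (η t)) (fun t => ℓ (σ (t - T)))
          (Set.uIcc T (T + S)) := by
        intro t ht
        rw [Set.uIcc_of_le (by linarith : T ≤ T + S)] at ht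
        by_cases h : t ≤ T
        · have : t = T := le_antisymm h ht.1
          simp [hηdef, this, hσ0]
        · simp [hηdef, h]
      have hη1 : IntervalIntegrable (fun t => ℓ (η t)) volume 0 T := iiCongr hEq1.symm hγint
      have hmem : (∫ t in (0:ℝ)..(T + S), ℓ (η t)) + g (η (T + S)) ∈ costSetA Ω ℓ g x :=
        ⟨T + S, by linarith, η, hηlip, hηmaps, hη0, hηfr, hηIco, rfl⟩
      have hle := csInf_le (hfin x hx).2 hmem
      by_cases hint : IntervalIntegrable (fun t => ℓ (σ t)) volume 0 S
      · have hshift : IntervalIntegrable (fun t => ℓ (σ (t - T))) volume T (T + S) := by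
          have := hint.comp_sub_right T
          simpa [zero_add, add_comm] using this
        have hη2 : IntervalIntegrable (fun t => ℓ (η t)) volume T (T + S) :=
          iiCongr hEq2.symm hshift
        have hsplit : (∫ t in (0:ℝ)..(T + S), ℓ (η t))
            = (∫ t in (0:ℝ)..T, ℓ (γ t)) + ∫ t in (0:ℝ)..S, ℓ (σ t) := by
          rw [← intervalIntegral.integral_add_adjacent_intervals hη1 hη2,
            intervalIntegral.integral_congr hEq1, intervalIntegral.integral_congr hEq2,
            intervalIntegral.integral_comp_sub_right (fun t => ℓ (σ t)) T]
          simp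
        rw [hsplit, hηT] at hle
        linarith
      · have hσzero : (∫ t in (0:ℝ)..S, ℓ (σ t)) = 0 := intervalIntegral.integral_undef hint
        have hηnot : ¬ IntervalIntegrable (fun t => ℓ (η t)) volume 0 (T + S) := by
          intro h
          have h2 : IntervalIntegrable (fun t => ℓ (η t)) volume T (T + S) :=
            h.mono_set (by
              rw [Set.uIcc_of_le (by linarith : T ≤ T + S),
                Set.uIcc_of_le (by linarith : (0:ℝ) ≤ T + S)]
              exact Set.Icc_subset_Icc (by linarith) le_rfl)
          have h3 : IntervalIntegrable (fun t => ℓ (σ (t - T))) volume T (T + S) :=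
            iiCongr hEq2 h2
          have h4 := h3.comp_add_right T
          apply hint
          simpa using h4
        have hηzero : (∫ t in (0:ℝ)..(T + S), ℓ (η t)) = 0 :=
          intervalIntegral.integral_undef hηnot
        rw [hηzero, hηT] at hle
        rw [hσzero]
        linarith
    have hfinal := le_csInf (hfin _ hγT).1
      (fun w hw => by linarith [key w hw] :
        ∀ w ∈ costSetA Ω ℓ g (γ T),
          sInf (costSetA Ω ℓ g x) - (∫ t in (0:ℝ)..T, ℓ (γ t)) ≤ w)
    linarith
  · -- greatest lower bound
    intro b hb
    apply le_csInf (hfin x hx).1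
    rintro w ⟨T, hT, γ, hγlip, hγmaps, hγ0, hγT, hγIco, rfl⟩
    have hcont : ∀ c, 0 ≤ c → c < T → ContinuousOn (fun s => ℓ (γ s)) (Set.Icc 0 c) := by
      intro c hc hcT
      exact hℓ.comp (hγlip.continuousOn.mono (Set.Icc_subset_Icc le_rfl hcT.le))
        (fun s hs => hγIco ⟨hs.1, lt_of_le_of_lt hs.2 hcT⟩)
    have hii : ∀ c, 0 ≤ c → c < T → IntervalIntegrable (fun s => ℓ (γ s)) volume 0 c := by
      intro c hc hcT
      exact (show ContinuousOn _ (Set.uIcc 0 c) by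
        rw [Set.uIcc_of_le hc]; exact hcont c hc hcT).intervalIntegrable
    have htrunc : ∀ t, 0 < t → t < T →
        b ≤ (∫ s in (0:ℝ)..t, ℓ (γ s)) + sInf (costSetA Ω ℓ g (γ t)) := by
      intro t ht ht'
      exact hb ⟨t, ht, γ, hγlip.mono (Set.Icc_subset_Icc le_rfl ht'.le),
        fun s hs => hγIco ⟨hs.1, lt_of_le_of_lt hs.2 ht'⟩, hγ0, rfl⟩
    have htail : ∀ t, 0 < t → t < T →
        sInf (costSetA Ω ℓ g (γ t)) ≤ (∫ s in t..T, ℓ (γ s)) + g (γ T) := by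
      intro t ht ht'
      have hmem : (∫ s in t..T, ℓ (γ s)) + g (γ T) ∈ costSetA Ω ℓ g (γ t) := by
        refine ⟨T - t, by linarith, fun s => γ (s + t), tailLip hγlip ht.le ht'.le,
          fun s hs => hγmaps ⟨by linarith [hs.1], by linarith [hs.2]⟩, by simp, ?_,
          fun s hs => hγIco ⟨by linarith [hs.1], by linarith [hs.2]⟩, ?_⟩
        · simp only [sub_add_cancel]; exact hγT
        · rw [intervalIntegral.integral_comp_add_right (fun s => ℓ (γ s)) t, zero_add]
          simp
      exact csInf_le (hfin (γ t) (hγIco ⟨ht.le, ht'⟩)).2 hmem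
    by_cases hint : IntervalIntegrable (fun s => ℓ (γ s)) volume 0 T
    · have h1 : IntervalIntegrable (fun s => ℓ (γ s)) volume 0 (T/2) :=
        hint.mono_set (by
          rw [Set.uIcc_of_le (by linarith : (0:ℝ) ≤ T/2), Set.uIcc_of_le hT.le]
          exact Set.Icc_subset_Icc le_rfl (by linarith))
      have h2 : IntervalIntegrable (fun s => ℓ (γ s)) volume (T/2) T :=
        hint.mono_set (by
          rw [Set.uIcc_of_le (by linarith : T/2 ≤ T), Set.uIcc_of_le hT.le]
          exact Set.Icc_subset_Icc (by linarith) le_rfl)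
      have hsum := intervalIntegral.integral_add_adjacent_intervals h1 h2
      have hA := htrunc (T/2) (by linarith) (by linarith)
      have hB := htail (T/2) (by linarith) (by linarith)
      linarith
    · have hzero := intervalIntegral.integral_undef hint
      obtain ⟨M, hM⟩ := (isCompact_Icc (a := (0:ℝ)) (b := T/2)).exists_bound_of_continuousOn
        (hcont (T/2) (by linarith) (by linarith))
      rw [hzero]
      apply le_of_forall_pos_le_add
      intro ε hε
      set K := max M 1 with hK
      have hK0 : (0:ℝ) < K := lt_of_lt_of_le one_pos (le_max_right _ _)
      set t := min (T/2) (ε / K) with htdef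
      have ht0 : 0 < t := lt_min (by linarith) (div_pos hε hK0)
      have htT2 : t ≤ T/2 := min_le_left _ _
      have htT : t < T := lt_of_le_of_lt htT2 (by linarith)
      have hmid : (∫ s in t..T, ℓ (γ s)) = 0 := by
        apply intervalIntegral.integral_undef
        intro h
        exact hint ((hii t ht0.le htT).trans h)
      have hbound : (∫ s in (0:ℝ)..t, ℓ (γ s)) ≤ ε := by
        have hc : (∫ s in (0:ℝ)..t, ℓ (γ s)) ≤ ∫ _ in (0:ℝ)..t, K := by
          apply intervalIntegral.integral_mono_on ht0.le (hii t ht0.le htT)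
            intervalIntegrable_const
          intro s hs
          have := hM s ⟨hs.1, hs.2.trans htT2⟩
          rw [Real.norm_eq_abs] at this
          exact le_trans (le_trans (le_abs_self _) this) (le_max_left _ _)
        rw [intervalIntegral.integral_const, smul_eq_mul] at hc
        have ht2 : t ≤ ε / K := min_le_right _ _
        calc (∫ s in (0:ℝ)..t, ℓ (γ s)) ≤ (t - 0) * K := hc
          _ ≤ (ε / K) * K := by
              apply mul_le_mul_of_nonneg_right (by linarith) hK0.le
          _ = ε := div_mul_cancel₀ ε hK0.ne'
      have hA := htrunc t ht0 htT
      have hB := htail t ht0 htT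
      rw [hmid] at hB
      linarith
end

section
/- Every compact eikonal metric space (X,d) is rectifiably connected: for every pair of points x,y ∈ X there exists a continuous curve of finite length in X joining x to y. -/
open Filter Topology Set MeasureTheory
open scoped ENNReal NNReal

section aux
variable {X : Type*} [MetricSpace X]

lemma locSlopeOn_eq_zero_of_min {u : X → ℝ} {z : X} (hz : ∀ w, u z ≤ u w) :
    locSlopeOn u Set.univ z = 0 := by
  refine le_antisymm ?_ zero_le
  refine Filter.limsup_le_of_le (by isBoundedDefault) ?_
  refine Filter.Eventually.of_forall (fun w => ?_)
  have h1 : max (u z - u w) 0 = 0 := max_eq_right (by linarith [hz w])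
  simp [h1]

lemma exists_potential [CompactSpace X] (h : IsEikonalSpace X) {x y : X} (hxy : x ≠ y) :
    ∃ u : X → ℝ, Continuous u ∧ u y = 0 ∧ (∀ z, 0 ≤ u z) ∧
      ∀ z, z ≠ y → locSlopeOn u Set.univ z = 1 := by
  -- `{y}` is not open
  have hyo : ¬ IsOpen ({y} : Set X) := by
    intro hopen
    have hfr : frontier ({y} : Set X) = ∅ :=
      IsClopen.frontier_eq ⟨isClosed_singleton, hopen⟩
    have hne : ({y} : Set X) ≠ Set.univ := by
      intro he
      have : x ∈ ({y} : Set X) := by rw [he]; trivial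
      exact hxy (by simpa using this)
    obtain ⟨u, _, hu2, _⟩ :=
      h {y} hopen ⟨y, rfl⟩ hne (fun _ => 1) (fun _ => 0) continuousOn_const
        ⟨1, fun _ _ => by norm_num⟩ ⟨1, one_pos, fun _ _ => le_refl 1⟩
        (by rw [hfr]; exact continuousOn_empty _)
        (by intro a ha; rw [hfr] at ha; exact absurd ha (Set.notMem_empty a))
    have h1 := hu2 y rfl
    rw [isClosed_singleton.closure_eq] at h1
    have h2 : (𝓝[({y} : Set X) \ {y}] y) = ⊥ := by
      rw [Set.diff_self, nhdsWithin_empty]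
    rw [locSlopeOn, h2, Filter.limsup_bot] at h1
    simp at h1
  have hpn : NeBot (𝓝[≠] y) := by
    rw [neBot_iff]
    intro hb
    exact hyo ((isOpen_singleton_iff_punctured_nhds y).mpr hb)
  have hclos : closure ({y}ᶜ : Set X) = Set.univ :=
    (dense_compl_singleton y).closure_eq
  have hfront : frontier (({y} : Set X)ᶜ) = {y} := by
    rw [frontier_compl, frontier, isClosed_singleton.closure_eq, interior_singleton,
      Set.diff_empty]
  obtain ⟨u, hu1, hu2, hu3⟩ :=
    h ({y}ᶜ) isClosed_singleton.isOpen_compl ⟨x, hxy⟩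
      (by
        intro he
        have : y ∈ ({y}ᶜ : Set X) := by rw [he]; trivial
        simp at this)
      (fun _ => 1) (fun _ => 0) continuousOn_const
      ⟨1, fun _ _ => by norm_num⟩ ⟨1, one_pos, fun _ _ => le_refl 1⟩
      (by rw [hfront]; exact continuousOn_const)
      (by
        intro a _ b _ T hT γ _ _ _ _ _
        rw [intervalIntegral.integral_const]
        simp
        linarith)
  have hcont : Continuous u := by
    rw [← continuousOn_univ]
    rw [hclos] at hu1
    exact hu1
  have huy : u y = 0 := hu3 y (by rw [hfront]; trivial)
  have hslope : ∀ z, z ≠ y → locSlopeOn u Set.univ z = 1 := by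
    intro z hz
    have := hu2 z (by simpa using hz)
    rw [hclos] at this
    rw [this, ENNReal.ofReal_one]
  have hnn : ∀ z, 0 ≤ u z := by
    obtain ⟨zm, -, hmin⟩ :=
      isCompact_univ.exists_isMinOn ⟨x, Set.mem_univ x⟩ hcont.continuousOn
    have hzm : ∀ w, u zm ≤ u w := fun w => hmin (Set.mem_univ w)
    have hzy : zm = y := by
      by_contra hne
      have h1 := hslope zm hne
      rw [locSlopeOn_eq_zero_of_min hzm] at h1
      exact zero_ne_one h1
    intro w
    have := hzm w
    rwa [hzy, huy] at this
  exact ⟨u, hcont, huy, hnn, hslope⟩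


lemma exists_step' {u : X → ℝ} {z : X}
    (hs : locSlopeOn u Set.univ z = 1) {r : ℝ} (hr : 0 < r) :
    ∃ w, 0 < dist z w ∧ dist z w < r ∧ (2/3) * dist z w < u z - u w := by
  by_contra hcon
  push_neg at hcon
  have hev : ∀ᶠ w in 𝓝[Set.univ \ {z}] z,
      ENNReal.ofReal (max (u z - u w) 0 / dist z w) ≤ ENNReal.ofReal (2/3) := by
    filter_upwards [self_mem_nhdsWithin,
      mem_nhdsWithin_of_mem_nhds (Metric.ball_mem_nhds z hr)] with w hw hball
    have hne : w ≠ z := hw.2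
    have hd : 0 < dist z w := by rw [dist_comm]; exact dist_pos.mpr hne
    have hlt : dist z w < r := by rw [dist_comm]; exact hball
    have hdrop : u z - u w ≤ 2/3 * dist z w := hcon w hd hlt
    apply ENNReal.ofReal_le_ofReal
    rw [div_le_iff₀ hd]
    exact max_le hdrop (by positivity)
  have hle : locSlopeOn u Set.univ z ≤ ENNReal.ofReal (2/3) :=
    Filter.limsup_le_of_le (by isBoundedDefault) hev
  rw [hs] at hle
  exact absurd hle (not_le.mpr (ENNReal.ofReal_lt_one.mpr (by norm_num)))

lemma exists_chain [CompactSpace X] {u : X → ℝ} (hu : Continuous u)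
    (hnn : ∀ z, 0 ≤ u z) {y : X}
    (hslope : ∀ z, z ≠ y → locSlopeOn u Set.univ z = 1)
    (x : X) {δ : ℝ} (hδ : 0 < δ) :
    ∃ z : ℕ → X, z 0 = x ∧
      (∀ n, dist (z n) (z (n+1)) ≤ δ) ∧
      (∀ n, u (z (n+1)) + (1/2) * dist (z n) (z (n+1)) ≤ u (z n)) ∧
      Tendsto z atTop (𝓝 y) := by
  classical
  set A : X → Set X :=
    fun w => {w' | dist w w' ≤ δ ∧ u w' + (1/2) * dist w w' ≤ u w} with hA
  have hself : ∀ w, w ∈ A w := by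
    intro w
    simp [hA, dist_self, hδ.le]
  have hAne : ∀ w, (u '' A w).Nonempty := fun w => ⟨u w, w, hself w, rfl⟩
  have hAbdd : ∀ w, BddBelow (u '' A w) := by
    intro w
    exact ⟨0, by rintro a ⟨w', -, rfl⟩; exact hnn w'⟩
  have key : ∀ (w : X) (n : ℕ), ∃ w', w' ∈ A w ∧ u w' ≤ sInf (u '' A w) + (1/2)^n := by
    intro w n
    obtain ⟨a, ⟨w', hw', rfl⟩, ha⟩ := Real.lt_sInf_add_pos (hAne w)
      (show (0:ℝ) < (1/2)^n by positivity)
    exact ⟨w', hw', ha.le⟩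
  choose step hstep1 hstep2 using key
  let z : ℕ → X := fun n => Nat.rec x (fun k w => step w k) n
  have hz0 : z 0 = x := rfl
  have hzs : ∀ n, z (n+1) = step (z n) n := fun n => rfl
  have hmemA : ∀ n, z (n+1) ∈ A (z n) := by intro n; rw [hzs n]; exact hstep1 (z n) n
  have hd : ∀ n, dist (z n) (z (n+1)) ≤ δ := fun n => (hmemA n).1
  have hdrop : ∀ n, u (z (n+1)) + (1/2) * dist (z n) (z (n+1)) ≤ u (z n) :=
    fun n => (hmemA n).2
  have hanti : Antitone (fun n => u (z n)) := by
    apply antitone_nat_of_succ_le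
    intro n
    have := hdrop n
    have hdn : 0 ≤ dist (z n) (z (n+1)) := dist_nonneg
    linarith
  have hbdd : BddBelow (Set.range fun n => u (z n)) := ⟨0, by rintro a ⟨n, rfl⟩; exact hnn _⟩
  set α := ⨅ n, u (z n) with hα
  have htendα : Tendsto (fun n => u (z n)) atTop (𝓝 α) := tendsto_atTop_ciInf hanti hbdd
  have hgeα : ∀ n, α ≤ u (z n) := fun n => ciInf_le hbdd n
  -- every subsequential limit is y
  have hsub : ∀ (ψ : ℕ → ℕ) (p : X), Tendsto ψ atTop atTop →
      Tendsto (z ∘ ψ) atTop (𝓝 p) → p = y := by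
    intro ψ p hψ hzp
    by_contra hp
    have hup : u p = α :=
      tendsto_nhds_unique ((hu.tendsto p).comp hzp) (htendα.comp hψ)
    obtain ⟨w, hw1, hw2, hw3⟩ := exists_step' (hslope p hp) (show (0:ℝ) < δ/2 by linarith)
    set r := dist p w with hr
    set c := u p - u w with hc
    have hcr : 2/3 * r < c := hw3
    have hcpos : 0 < c := lt_of_le_of_lt (by positivity) hcr
    have hev1 : ∀ᶠ n in atTop, dist (z (ψ n)) p < min (δ/2) (r/3) := by
      have : Tendsto (fun n => dist (z (ψ n)) p) atTop (𝓝 0) := by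
        rw [← dist_self p]
        exact (Filter.Tendsto.dist hzp tendsto_const_nhds)
      exact this.eventually (gt_mem_nhds (by positivity))
    have hev2 : ∀ᶠ n in atTop, ((1:ℝ)/2)^(ψ n) < c := by
      have : Tendsto (fun n => ((1:ℝ)/2)^(ψ n)) atTop (𝓝 0) :=
        (tendsto_pow_atTop_nhds_zero_of_lt_one (by norm_num) (by norm_num)).comp hψ
      exact this.eventually (gt_mem_nhds hcpos)
    obtain ⟨n, h1, h2⟩ := (hev1.and hev2).exists
    set m := ψ n
    have hη1 : dist (z m) p < δ/2 := lt_of_lt_of_le h1 (min_le_left _ _)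
    have hη2 : dist (z m) p < r/3 := lt_of_lt_of_le h1 (min_le_right _ _)
    have hwA : w ∈ A (z m) := by
      constructor
      · refine le_of_lt ?_
        calc dist (z m) w ≤ dist (z m) p + dist p w := dist_triangle _ _ _
          _ < δ/2 + δ/2 := by
            apply add_lt_add hη1
            calc dist p w = r := rfl
              _ < δ/2 := hw2
          _ = δ := by ring
      · have hdzw : dist (z m) w ≤ r + r/3 := by
          calc dist (z m) w ≤ dist (z m) p + dist p w := dist_triangle _ _ _
            _ ≤ r/3 + r := by rw [← hr]; linarith
            _ = r + r/3 := by ring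
        have huw : u w = α - c := by rw [hc, hup]; ring
        have : u w + (1/2) * dist (z m) w ≤ α - c + (1/2) * (r + r/3) := by
          rw [huw]
          have : (0:ℝ) < 1/2 := by norm_num
          nlinarith
        refine le_of_lt ?_
        calc u w + (1/2) * dist (z m) w ≤ α - c + (1/2)*(r + r/3) := this
          _ = α - c + 2/3 * r := by ring
          _ < α := by linarith
          _ ≤ u (z m) := hgeα m
    have hinf : sInf (u '' A (z m)) ≤ u w := csInf_le (hAbdd _) ⟨w, hwA, rfl⟩
    have hfinal : u (z (m+1)) < α := by
      have h3 := hstep2 (z m) m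
      rw [← hzs m] at h3
      have huw : u w = α - c := by rw [hc, hup]; ring
      calc u (z (m+1)) ≤ sInf (u '' A (z m)) + (1/2)^m := h3
        _ ≤ u w + (1/2)^m := by linarith
        _ = α - c + (1/2)^m := by rw [huw]
        _ < α := by have := h2; linarith
    exact absurd (hgeα (m+1)) (not_le.mpr hfinal)
  have htendy : Tendsto z atTop (𝓝 y) := by
    refine tendsto_of_subseq_tendsto fun ns hns => ?_
    obtain ⟨a, φ, hφ, ha⟩ := CompactSpace.tendsto_subseq (z ∘ ns)
    have hay : a = y := hsub (ns ∘ φ) a (hns.comp hφ.tendsto_atTop) ha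
    exact ⟨φ, hay ▸ ha⟩
  exact ⟨z, hz0, hd, hdrop, htendy⟩

lemma exists_approx_path [CompactSpace X] {u : X → ℝ} (hu : Continuous u)
    (hnn : ∀ z, 0 ≤ u z) {x y : X} (hxy : x ≠ y)
    (hslope : ∀ z, z ≠ y → locSlopeOn u Set.univ z = 1)
    {δ : ℝ} (hδ : 0 < δ) :
    ∃ f : ℝ → X, f 0 = x ∧ f (2 * u x) = y ∧
      ∀ a b : ℝ, 0 ≤ a → a ≤ b → dist (f a) (f b) ≤ b - a + δ := by
  obtain ⟨z, hz0, hzδ, hzdrop, hzy⟩ := exists_chain hu hnn hslope x hδ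
  set d : ℕ → ℝ := fun n => dist (z n) (z (n+1)) with hd
  set ts : ℕ → ℝ := fun n => ∑ j ∈ Finset.range n, d j with hts
  have hd0 : ∀ n, 0 ≤ d n := fun n => dist_nonneg
  have hts0 : ts 0 = 0 := Finset.sum_range_zero d
  have htss : ∀ n, ts (n+1) = ts n + d n := fun n => Finset.sum_range_succ d n
  have htsnn : ∀ n, 0 ≤ ts n := fun n => Finset.sum_nonneg (fun j _ => hd0 j)
  have hbound : ∀ n, ts n ≤ 2 * (u x - u (z n)) := by
    intro n
    induction n with
    | zero => rw [hts0, hz0]; simp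
    | succ n ih =>
      have h1 := hzdrop n
      rw [htss]
      have : d n ≤ 2 * (u (z n) - u (z (n+1))) := by
        simp only [hd]
        linarith
      linarith
  have hbound' : ∀ n, ts n ≤ 2 * u x := fun n => le_trans (hbound n) (by linarith [hnn (z n)])
  have hsum : Summable d := summable_of_sum_range_le hd0 hbound'
  set T := ∑' n, d n with hT
  have hT2 : T ≤ 2 * u x := Real.tsum_le_of_sum_range_le hd0 hbound'
  have htsT : Tendsto ts atTop (𝓝 T) := hsum.hasSum.tendsto_sum_nat
  have htsle : ∀ n, ts n ≤ T := fun n => Summable.sum_le_tsum (Finset.range n) (fun i _ => hd0 i) hsum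
  have hchain : ∀ m n, m ≤ n → dist (z m) (z n) ≤ ts n - ts m := by
    intro m n hmn
    induction n, hmn using Nat.le_induction with
    | base => simp
    | succ n hmn ih =>
      calc dist (z m) (z (n+1)) ≤ dist (z m) (z n) + dist (z n) (z (n+1)) :=
            dist_triangle _ _ _
        _ ≤ (ts n - ts m) + d n := add_le_add ih (le_refl _)
        _ = ts (n+1) - ts m := by rw [htss]; ring
  have hzyT : ∀ m, dist (z m) y ≤ T - ts m := by
    intro m
    have h1 : Tendsto (fun n => dist (z m) (z n)) atTop (𝓝 (dist (z m) y)) :=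
      tendsto_const_nhds.dist hzy
    refine le_of_tendsto h1 ?_
    filter_upwards [eventually_ge_atTop m] with n hn
    exact le_trans (hchain m n hn) (by linarith [htsle n])
  have hTpos : 0 < T := by
    rcases lt_or_ge 0 T with hc | hc
    · exact hc
    · exfalso
      have h1 := hzyT 0
      rw [hz0, hts0] at h1
      have : dist x y ≤ 0 := by linarith
      exact hxy (by rwa [← dist_le_zero])
  have hbddA : ∀ {a : ℝ}, a < T → BddAbove {i | ts i ≤ a} := by
    intro a haT
    have hev : ∀ᶠ n in atTop, a < ts n := htsT.eventually (lt_mem_nhds haT)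
    obtain ⟨N, hN⟩ := hev.exists_forall_of_atTop
    refine ⟨N, fun i hi => ?_⟩
    by_contra hiN
    push_neg at hiN
    exact absurd hi (not_le.mpr (hN i hiN.le))
  have hneA : ∀ {a : ℝ}, 0 ≤ a → ({i | ts i ≤ a}).Nonempty := by
    intro a ha
    exact ⟨0, by simpa [hts0] using ha⟩
  set k : ℝ → ℕ := fun a => sSup {i | ts i ≤ a} with hk
  have hkle : ∀ {a : ℝ}, 0 ≤ a → a < T → ts (k a) ≤ a := by
    intro a ha haT
    exact Nat.sSup_mem (hneA ha) (hbddA haT)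
  have hksucc : ∀ {a : ℝ}, 0 ≤ a → a < T → a < ts (k a + 1) := by
    intro a ha haT
    by_contra hle
    push_neg at hle
    have : k a + 1 ≤ k a := le_csSup (hbddA haT) hle
    omega
  have hkgt : ∀ {a : ℝ}, 0 ≤ a → a < T → a - δ < ts (k a) := by
    intro a ha haT
    have h1 := hksucc ha haT
    rw [htss] at h1
    have := hzδ (k a)
    simp only [hd] at *
    linarith
  have hkmono : ∀ {a b : ℝ}, 0 ≤ a → a ≤ b → b < T → k a ≤ k b := by
    intro a b ha hab hbT
    exact csSup_le_csSup (hbddA hbT) (hneA ha) (fun i hi => le_trans hi hab)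
  classical
  set f : ℝ → X := fun a => if T ≤ a then y else z (k a) with hf
  have hf0 : f 0 = x := by
    rw [hf]
    simp only [not_le.mpr hTpos, if_false]
    have h1 : ts (k 0) ≤ 0 := hkle le_rfl hTpos
    have h2 : ts (k 0) = 0 := le_antisymm h1 (htsnn _)
    have h3 : dist (z 0) (z (k 0)) ≤ ts (k 0) - ts 0 := hchain 0 (k 0) (Nat.zero_le _)
    rw [h2, hts0, sub_self] at h3
    have := dist_le_zero.mp h3
    rw [← this, hz0]
  have hfM : f (2 * u x) = y := by rw [hf]; simp [if_pos hT2]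
  refine ⟨f, hf0, hfM, ?_⟩
  intro a b ha hab
  by_cases hTa : T ≤ a
  · have hTb : T ≤ b := le_trans hTa hab
    simp only [hf, if_pos hTa, if_pos hTb, dist_self]
    linarith
  · push_neg at hTa
    by_cases hTb : T ≤ b
    · simp only [hf, if_neg (not_le.mpr hTa), if_pos hTb]
      have h1 : dist (z (k a)) y ≤ T - ts (k a) := hzyT _
      have h2 : a - δ < ts (k a) := hkgt ha hTa
      calc dist (z (k a)) y ≤ T - ts (k a) := h1
        _ ≤ b - (a - δ) := by linarith
        _ = b - a + δ := by ring
    · push_neg at hTb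
      simp only [hf, if_neg (not_le.mpr hTa), if_neg (not_le.mpr hTb)]
      have hkab : k a ≤ k b := hkmono ha hab hTb
      have h1 : dist (z (k a)) (z (k b)) ≤ ts (k b) - ts (k a) := hchain _ _ hkab
      have h2 : a - δ < ts (k a) := hkgt ha hTa
      have h3 : ts (k b) ≤ b := hkle (le_trans ha hab) hTb
      linarith

end aux

/-- Every compact eikonal metric space is rectifiably connected. -/
theorem stmt8 {X : Type*} [MetricSpace X] [CompactSpace X] (h : IsEikonalSpace X) (x y : X) :
    ∃ T : ℝ, 0 ≤ T ∧ ∃ γ : ℝ → X, ContinuousOn γ (Set.Icc 0 T) ∧ γ 0 = x ∧ γ T = y ∧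
      eVariationOn γ (Set.Icc 0 T) ≠ ⊤ := by
  by_cases hxy : x = y
  · refine ⟨0, le_rfl, fun _ => x, continuousOn_const, rfl, hxy, ?_⟩
    rw [Set.Icc_self, eVariationOn.subsingleton _ Set.subsingleton_singleton]
    exact ENNReal.zero_ne_top
  · obtain ⟨u, hu, huy, hnn, hslope⟩ := exists_potential h hxy
    set M := 2 * u x with hM
    have hM0 : 0 ≤ M := by have := hnn x; rw [hM]; linarith
    have key : ∀ n : ℕ, ∃ f : ℝ → X, f 0 = x ∧ f M = y ∧
        ∀ a b : ℝ, 0 ≤ a → a ≤ b → dist (f a) (f b) ≤ b - a + 1/(n+1) :=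
      fun n => exists_approx_path hu hnn hxy hslope (by positivity)
    choose f hf0 hfM hflip using key
    set U : Ultrafilter ℕ := Ultrafilter.of atTop with hUdef
    have hUle : (U : Filter ℕ) ≤ atTop := Ultrafilter.of_le _
    set γ : ℝ → X := fun a => (U.map (fun n => f n a)).lim with hγ
    have htend : ∀ a, Tendsto (fun n => f n a) U (𝓝 (γ a)) := by
      intro a
      have h1 := (U.map (fun n => f n a)).le_nhds_lim
      rwa [Ultrafilter.coe_map] at h1
    have hlip : ∀ a b : ℝ, 0 ≤ a → a ≤ b → dist (γ a) (γ b) ≤ b - a := by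
      intro a b ha hab
      have hdist : Tendsto (fun n => dist (f n a) (f n b)) U (𝓝 (dist (γ a) (γ b))) :=
        (htend a).dist (htend b)
      refine le_of_forall_pos_le_add ?_
      intro ε hε
      refine le_of_tendsto hdist ?_
      have hev : ∀ᶠ n : ℕ in atTop, (1:ℝ)/(n+1) < ε := by
        have h2 : Tendsto (fun n : ℕ => (1:ℝ)/(n+1)) atTop (𝓝 0) :=
          tendsto_one_div_add_atTop_nhds_zero_nat
        exact h2.eventually (gt_mem_nhds hε)
      refine hUle (hev.mono fun n hn => ?_)
      have := hflip n a b ha hab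
      linarith
    have hγ0 : γ 0 = x := by
      have h1 := htend 0
      have h2 : (fun n => f n 0) = fun _ => x := funext hf0
      rw [h2] at h1
      exact tendsto_nhds_unique h1 tendsto_const_nhds
    have hγM : γ M = y := by
      have h1 := htend M
      have h2 : (fun n => f n M) = fun _ => y := funext hfM
      rw [h2] at h1
      exact tendsto_nhds_unique h1 tendsto_const_nhds
    have hlips : LipschitzOnWith 1 γ (Set.Icc 0 M) := by
      intro a ha b hb
      rw [edist_dist, edist_dist, ENNReal.coe_one, one_mul]
      apply ENNReal.ofReal_le_ofReal
      rw [Real.dist_eq]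
      rcases le_total a b with hab | hab
      · calc dist (γ a) (γ b) ≤ b - a := hlip a b ha.1 hab
          _ = |b - a| := (abs_of_nonneg (by linarith)).symm
          _ = |a - b| := abs_sub_comm b a
      · calc dist (γ a) (γ b) = dist (γ b) (γ a) := dist_comm _ _
          _ ≤ a - b := hlip b a hb.1 hab
          _ = |a - b| := (abs_of_nonneg (by linarith)).symm
    have hvar : eVariationOn γ (Set.Icc 0 M) ≠ ⊤ := by
      have h1 : eVariationOn (γ ∘ id) (Set.Icc 0 M) ≤ 1 * eVariationOn id (Set.Icc 0 M) :=
        hlips.comp_eVariationOn_le (Set.mapsTo_id _)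
      rw [Function.comp_id, one_mul] at h1
      have h2 : eVariationOn (id : ℝ → ℝ) (Set.Icc 0 M ∩ Set.Icc 0 M) ≤
          ENNReal.ofReal (M - 0) :=
        (monotone_id.monotoneOn _).eVariationOn_le ⟨le_rfl, hM0⟩ ⟨hM0, le_rfl⟩
      rw [Set.inter_self] at h2
      exact ne_top_of_le_ne_top (by simp) (le_trans h1 h2)
    exact ⟨M, hM0, γ, hlips.continuousOn, hγ0, hγM, hvar⟩
end

section
/- Let (X,d) be a proper metric space (every closed bounded subset is compact) and let f : X → ℝ be a continuous function such that the local slope s[f] : X → ℝ is (finite and) continuous. Then for every x ∈ X with s[f](x) ≠ 0 there exist T > 0 and a 1-Lipschitz curve γ : [0,T] → X with γ(0) = x such that f(γ(t)) = f(x) − ∫_0^t s[f](γ(s))ds for all t ∈ [0,T]. -/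
open Filter Topology Set MeasureTheory
open scoped ENNReal NNReal

section aux
variable {X : Type*} [MetricSpace X] (f : X → ℝ)

lemma slope_upper {x : X} (hfin : locSlope f x ≠ ⊤) {r : ℝ}
    (hr : (locSlope f x).toReal < r) :
    ∃ δ > 0, ∀ y, dist x y < δ → y ≠ x → f x - f y ≤ r * dist x y := by
  have h0 : locSlope f x < ENNReal.ofReal r := (ENNReal.lt_ofReal_iff_toReal_lt hfin).2 hr
  have hev : ∀ᶠ y in 𝓝[Set.univ \ {x}] x,
      ENNReal.ofReal (max (f x - f y) 0 / dist x y) < ENNReal.ofReal r :=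
    eventually_lt_of_limsup_lt h0
  have hev' : ∀ᶠ y in 𝓝[Set.univ \ {x}] x, f x - f y ≤ r * dist x y := by
    filter_upwards [hev, self_mem_nhdsWithin] with y hy hy'
    have hne : y ≠ x := hy'.2
    have hd : 0 < dist x y := by simpa [dist_comm] using dist_pos.2 hne
    have hro : max (f x - f y) 0 / dist x y < r :=
      (ENNReal.ofReal_lt_ofReal_iff_of_nonneg (by positivity)).1 hy
    have : max (f x - f y) 0 < r * dist x y := (div_lt_iff₀ hd).1 hro
    exact (le_max_left _ _).trans this.le
  obtain ⟨δ, hδ, h⟩ := Metric.mem_nhdsWithin_iff.1 hev'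
  exact ⟨δ, hδ, fun y hxy hne =>
    h ⟨Metric.mem_ball.2 (by simpa [dist_comm] using hxy), trivial, hne⟩⟩

lemma slope_lower {x : X} {r : ℝ} (hr : 0 < r)
    (h : ENNReal.ofReal r < locSlope f x) :
    ∀ η > 0, ∃ y, y ≠ x ∧ dist x y < η ∧ r * dist x y < f x - f y := by
  intro η hη
  have hfr : ∃ᶠ y in 𝓝[Set.univ \ {x}] x,
      ENNReal.ofReal r < ENNReal.ofReal (max (f x - f y) 0 / dist x y) :=
    frequently_lt_of_lt_limsup (by isBoundedDefault) h
  have hev : ∀ᶠ y in 𝓝[Set.univ \ {x}] x, y ∈ Set.univ \ {x} ∧ dist x y < η := by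
    have h1 : ∀ᶠ y in 𝓝[Set.univ \ {x}] x, y ∈ Set.univ \ {x} :=
      eventually_mem_nhdsWithin
    have h2 : ∀ᶠ y in 𝓝[Set.univ \ {x}] x, dist x y < η := by
      refine eventually_nhdsWithin_of_eventually_nhds ?_
      filter_upwards [Metric.ball_mem_nhds x hη] with y hy
      simpa [dist_comm] using hy
    exact h1.and h2
  obtain ⟨y, hy1, hy2, hy3⟩ := (hfr.and_eventually hev).exists
  have hne : y ≠ x := hy2.2
  have hd : 0 < dist x y := by simpa [dist_comm] using dist_pos.2 hne
  have hro : r < max (f x - f y) 0 / dist x y :=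
    (ENNReal.ofReal_lt_ofReal_iff_of_nonneg hr.le).1 hy1
  have h1 : r * dist x y < max (f x - f y) 0 := (lt_div_iff₀ hd).1 hro
  have h2 : 0 < max (f x - f y) 0 := lt_of_le_of_lt (by positivity) h1
  have : max (f x - f y) 0 = f x - f y := by
    rcases max_cases (f x - f y) 0 with ⟨h3, _⟩ | ⟨h3, h4⟩
    · exact h3
    · rw [h3] at h2; linarith
  exact ⟨y, hne, hy3, by rwa [this] at h1⟩

end aux

section curve
variable {X : Type*} [MetricSpace X] {f : X → ℝ}

lemma slope_toReal_nonneg (f : X → ℝ) (x : X) : 0 ≤ (locSlope f x).toReal :=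
  ENNReal.toReal_nonneg

lemma descent_le_integral (hf : Continuous f)
    (hfin : ∀ x, locSlope f x ≠ ⊤) (hcont : Continuous fun x => (locSlope f x).toReal)
    {γ : ℝ → X} (hγ : LipschitzWith 1 γ) {a b : ℝ} (hab : a ≤ b) :
    f (γ a) - f (γ b) ≤ ∫ u in a..b, (locSlope f (γ u)).toReal := by
  set g : ℝ → ℝ := fun u => (locSlope f (γ u)).toReal with hg
  have hgc : Continuous g := hcont.comp hγ.continuous
  set F : ℝ → ℝ := fun t => f (γ a) - f (γ t) with hF
  have hFc : Continuous F := continuous_const.sub (hf.comp hγ.continuous)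
  set B : ℝ → ℝ := fun t => ∫ u in a..t, g u with hB
  have hB' : ∀ x : ℝ, HasDerivAt B (g x) x := fun x =>
    (hgc.integral_hasStrictDerivAt a x).hasDerivAt
  have key : ∀ ⦃x⦄, x ∈ Icc a b → F x ≤ B x := by
    refine image_le_of_liminf_slope_right_le_deriv_boundary hFc.continuousOn ?_
      (fun x _ => (hB' x).continuousAt.continuousWithinAt)
      (fun x _ => (hB' x).hasDerivWithinAt) ?_
    · simp [hF, hB, intervalIntegral.integral_same]
    · intro x _ r hr
      have hg0 : 0 ≤ g x := ENNReal.toReal_nonneg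
      set r' : ℝ := (g x + r) / 2 with hr'
      have hr'0 : 0 < r' := by rw [hr']; linarith
      have hr'r : r' < r := by rw [hr']; linarith
      obtain ⟨δ, hδ, hub⟩ := slope_upper f (hfin (γ x)) (show (locSlope f (γ x)).toReal < r' by
        rw [hr']; dsimp [g] at hr ⊢; linarith)
      have hev : ∀ᶠ z in 𝓝[>] x, slope F x z < r := by
        filter_upwards [Ioo_mem_nhdsGT_of_mem (show x ∈ Ico x (x + δ) by
          constructor <;> [exact le_rfl; linarith])] with z hz
        have hzx : 0 < z - x := by linarith [hz.1]
        have hd : dist (γ x) (γ z) ≤ z - x := by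
          have h := hγ.dist_le_mul x z
          rw [Real.dist_eq, abs_of_neg (show x - z < 0 by linarith)] at h
          simp only [NNReal.coe_one, one_mul] at h
          linarith
        have hnum : f (γ x) - f (γ z) ≤ r' * (z - x) := by
          rcases eq_or_ne (γ z) (γ x) with h | h
          · rw [h]; simp; exact mul_nonneg hr'0.le hzx.le
          · calc f (γ x) - f (γ z) ≤ r' * dist (γ x) (γ z) :=
                  hub _ (lt_of_le_of_lt hd (by linarith [hz.2])) h
              _ ≤ r' * (z - x) := by nlinarith
        have : slope F x z = (f (γ x) - f (γ z)) / (z - x) := by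
          simp only [slope_def_field, hF]
          ring
        rw [this]
        calc (f (γ x) - f (γ z)) / (z - x) ≤ r' := by
              rw [div_le_iff₀ hzx]; linarith
          _ < r := hr'r
      exact hev.frequently
  simpa [hF, hB] using key (right_mem_Icc.2 hab)

end curve

section chain
variable {X : Type*} [MetricSpace X] [ProperSpace X] {f : X → ℝ}

lemma chain_exists (hf : Continuous f) (hfin : ∀ x, locSlope f x ≠ ⊤)
    (hcont : Continuous fun x => (locSlope f x).toReal)
    (x₀ : X) {R σ ε : ℝ} (hR : 0 < R) (hσ : 0 < σ)
    (hball : ∀ y, dist x₀ y ≤ R → σ ≤ (locSlope f y).toReal)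
    (hε : 0 < ε) (hεσ : ε ≤ σ / 2) (hεR : ε ≤ R / 2) :
    ∃ (m : ℕ) (z : ℕ → X), z 0 = x₀ ∧ 0 < m ∧
      (∀ k, dist x₀ (z k) ≤ ∑ j ∈ Finset.range k, dist (z j) (z (j+1))) ∧
      (∀ k < m, 0 < dist (z k) (z (k+1)) ∧ dist (z k) (z (k+1)) ≤ ε ∧
        ((locSlope f (z k)).toReal - ε) * dist (z k) (z (k+1)) ≤ f (z k) - f (z (k+1))) ∧
      (∀ k < m, (∑ j ∈ Finset.range k, dist (z j) (z (j+1))) < R / 2) ∧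
      R / 2 ≤ ∑ j ∈ Finset.range m, dist (z j) (z (j+1)) := by
  classical
  set s : X → ℝ := fun y => (locSlope f y).toReal with hs
  set A : X → Set X := fun z => {w | 0 < dist z w ∧ dist z w ≤ ε ∧
    (s z - ε) * dist z w ≤ f z - f w} with hA
  -- nonemptiness of admissible sets in the ball
  have hAne : ∀ z, dist x₀ z ≤ R → (A z).Nonempty := by
    intro z hz
    have hsz : σ ≤ s z := hball z hz
    have hrpos : 0 < s z - ε := by linarith
    have hlt : ENNReal.ofReal (s z - ε) < locSlope f z := by
      have : locSlope f z = ENNReal.ofReal (s z) := (ENNReal.ofReal_toReal (hfin z)).symm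
      rw [this]
      exact (ENNReal.ofReal_lt_ofReal_iff (by linarith)).2 (by linarith)
    obtain ⟨w, hw1, hw2, hw3⟩ := slope_lower f hrpos hlt ε hε
    exact ⟨w, dist_pos.2 (Ne.symm hw1), hw2.le, hw3.le⟩
  have hDba : ∀ z, BddAbove ((dist z) '' (A z)) := by
    intro z
    refine ⟨ε, ?_⟩
    rintro _ ⟨w, hw, rfl⟩
    exact hw.2.1
  set D : X → ℝ := fun z => sSup ((dist z) '' (A z)) with hD
  have hDpos : ∀ z, dist x₀ z ≤ R → 0 < D z := by
    intro z hz
    obtain ⟨w, hw⟩ := hAne z hz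
    exact lt_of_lt_of_le hw.1 (le_csSup (hDba z) ⟨w, hw, rfl⟩)
  have hstepex : ∀ z, dist x₀ z ≤ R → ∃ w, w ∈ A z ∧ D z / 2 ≤ dist z w := by
    intro z hz
    obtain ⟨_, ⟨w, hw, rfl⟩, hlt⟩ :=
      exists_lt_of_lt_csSup (((hAne z hz).image (dist z))) (half_lt_self (hDpos z hz))
    exact ⟨w, hw, hlt.le⟩
  set step : X → X := fun z => if h : dist x₀ z ≤ R then (hstepex z h).choose else z
    with hstepdef
  have hstepspec : ∀ z (h : dist x₀ z ≤ R),
      step z ∈ A z ∧ D z / 2 ≤ dist z (step z) := by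
    intro z h
    rw [hstepdef]
    simp only [dif_pos h]
    exact (hstepex z h).choose_spec
  set z : ℕ → X := fun k => step^[k] x₀ with hz
  have hzsucc : ∀ k, z (k+1) = step (z k) := fun k => Function.iterate_succ_apply' step k x₀
  set d : ℕ → ℝ := fun k => dist (z k) (z (k+1)) with hd
  set t : ℕ → ℝ := fun k => ∑ j ∈ Finset.range k, d j with ht
  have htsucc : ∀ k, t (k+1) = t k + d k := by
    intro k; simp [ht, Finset.sum_range_succ]
  have hdistt : ∀ k, dist x₀ (z k) ≤ t k := by
    intro k
    induction k with
    | zero => simp [ht, hz]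
    | succ k ih =>
        calc dist x₀ (z (k+1)) ≤ dist x₀ (z k) + dist (z k) (z (k+1)) := dist_triangle _ _ _
          _ ≤ t k + d k := by exact add_le_add ih le_rfl
          _ = t (k+1) := (htsucc k).symm
  have hdnonneg : ∀ k, 0 ≤ d k := fun k => dist_nonneg
  have htmono : Monotone t := by
    intro i j hij
    exact Finset.sum_le_sum_of_subset_of_nonneg (Finset.range_subset_range.2 hij)
      (fun k _ _ => hdnonneg k)
  -- termination
  have hterm : ∃ k, R / 2 ≤ t k := by
    by_contra hcon
    push_neg at hcon
    have hzball : ∀ k, dist x₀ (z k) ≤ R := fun k =>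
      (hdistt k).trans ((hcon k).le.trans (by linarith))
    have hgood : ∀ k, z (k+1) ∈ A (z k) ∧ D (z k) / 2 ≤ d k := by
      intro k
      have := hstepspec (z k) (hzball k)
      rw [← hzsucc k] at this
      exact this
    have hsum : Summable d :=
      summable_of_sum_range_le hdnonneg (fun n => (hcon n).le)
    have hd0 : Tendsto d atTop (𝓝 0) := hsum.tendsto_atTop_zero
    have hcauchy : CauchySeq z := cauchySeq_of_dist_le_of_summable d (fun n => le_rfl) hsum
    obtain ⟨zs, hzs⟩ := cauchySeq_tendsto_of_complete hcauchy
    have hzsball : dist x₀ zs ≤ R := by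
      refine le_of_tendsto (tendsto_const_nhds.dist hzs) ?_
      exact Eventually.of_forall hzball
    have hszs : σ ≤ s zs := hball zs hzsball
    have hrpos : 0 < s zs - ε / 2 := by linarith
    have hlt : ENNReal.ofReal (s zs - ε / 2) < locSlope f zs := by
      have : locSlope f zs = ENNReal.ofReal (s zs) := (ENNReal.ofReal_toReal (hfin zs)).symm
      rw [this]
      exact (ENNReal.ofReal_lt_ofReal_iff (by linarith)).2 (by linarith)
    obtain ⟨w, hw1, hw2, hw3⟩ := slope_lower f hrpos hlt (ε / 2) (by linarith)
    set ρ : ℝ := dist zs w with hρ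
    have hρpos : 0 < ρ := dist_pos.2 (Ne.symm hw1)
    -- eventually w is admissible from z k with definite step size
    have hdw : Tendsto (fun k => dist (z k) w) atTop (𝓝 ρ) := hzs.dist tendsto_const_nhds
    have hfz : Tendsto (fun k => f (z k)) atTop (𝓝 (f zs)) := (hf.tendsto zs).comp hzs
    have hsz : Tendsto (fun k => s (z k)) atTop (𝓝 (s zs)) := (hcont.tendsto zs).comp hzs
    have hmargin : Tendsto (fun k => f (z k) - f w - (s (z k) - ε) * dist (z k) w) atTop
        (𝓝 (f zs - f w - (s zs - ε) * ρ)) := by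
      exact (hfz.sub tendsto_const_nhds).sub ((hsz.sub tendsto_const_nhds).mul hdw)
    have hmarginpos : 0 < f zs - f w - (s zs - ε) * ρ := by nlinarith
    have hev1 : ∀ᶠ k in atTop, 0 < f (z k) - f w - (s (z k) - ε) * dist (z k) w :=
      hmargin.eventually (eventually_gt_nhds hmarginpos)
    have hev2 : ∀ᶠ k in atTop, dist (z k) w < ε :=
      hdw.eventually (eventually_lt_nhds (by linarith))
    have hev3 : ∀ᶠ k in atTop, ρ / 2 < dist (z k) w :=
      hdw.eventually (eventually_gt_nhds (by linarith))
    have hev4 : ∀ᶠ k in atTop, d k < ρ / 4 :=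
      hd0.eventually (eventually_lt_nhds (by linarith))
    obtain ⟨k, ⟨⟨h1, h2⟩, h3, h4⟩⟩ := ((hev1.and hev2).and (hev3.and hev4)).exists
    have hwA : w ∈ A (z k) := ⟨by linarith, h2.le, by linarith⟩
    have hDk : ρ / 2 ≤ D (z k) := le_trans h3.le (le_csSup (hDba _) ⟨w, hwA, rfl⟩)
    have : ρ / 4 ≤ d k := le_trans (by linarith) (hgood k).2
    linarith
  set m : ℕ := Nat.find hterm with hm
  have hmspec : R / 2 ≤ t m := Nat.find_spec hterm
  have hmlt : ∀ k < m, t k < R / 2 := fun k hk => lt_of_not_ge (Nat.find_min hterm hk)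
  have hm0 : 0 < m := by
    rcases Nat.eq_zero_or_pos m with h | h
    · exfalso; rw [h] at hmspec; simp [ht] at hmspec; linarith
    · exact h
  have hprem : ∀ k < m, dist x₀ (z k) ≤ R := by
    intro k hk
    exact (hdistt k).trans ((hmlt k hk).le.trans (by linarith))
  refine ⟨m, z, rfl, hm0, hdistt, ?_, hmlt, hmspec⟩
  intro k hk
  have h := hstepspec (z k) (hprem k hk)
  rw [← hzsucc k] at h
  exact ⟨h.1.1, h.1.2.1, h.1.2.2⟩
end chain


set_option maxHeartbeats 2000000 in
/-- In a proper metric space, a continuous function with finite continuous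
local slope admits steepest-descent-like curves from any point of nonzero slope. -/
theorem stmt10 {X : Type*} [MetricSpace X] [ProperSpace X] (f : X → ℝ) (hf : Continuous f)
    (hfin : ∀ x, locSlope f x ≠ ⊤)
    (hcont : Continuous fun x => (locSlope f x).toReal) :
    ∀ x : X, locSlope f x ≠ 0 →
      ∃ T > (0:ℝ), ∃ γ : ℝ → X, LipschitzOnWith 1 γ (Set.Icc 0 T) ∧ γ 0 = x ∧
        ∀ t ∈ Set.Icc (0:ℝ) T,
          f (γ t) = f x - ∫ s in (0:ℝ)..t, (locSlope f (γ s)).toReal := by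
  classical
  intro x hx0
  set sl : X → ℝ := fun y => (locSlope f y).toReal with hsldef
  have hslapp : ∀ y, (locSlope f y).toReal = sl y := fun y => by rw [hsldef]
  have hslc : Continuous sl := hcont
  have hsl0 : ∀ y : X, 0 ≤ sl y := fun y => by rw [← hslapp]; exact ENNReal.toReal_nonneg
  have hc : 0 < sl x := by rw [← hslapp]; exact ENNReal.toReal_pos hx0 (hfin x)
  obtain ⟨R, hR, hRball⟩ : ∃ R > 0, ∀ y, dist x y ≤ R → sl x / 2 ≤ sl y := by
    have hev : ∀ᶠ y in 𝓝 x, sl x / 2 < sl y :=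
      (hslc.tendsto x).eventually (eventually_gt_nhds (half_lt_self hc))
    rw [Metric.eventually_nhds_iff] at hev
    obtain ⟨δ, hδ, h⟩ := hev
    refine ⟨δ/2, by linarith, fun y hy => ?_⟩
    exact (h (show dist y x < δ by rw [dist_comm]; linarith)).le
  set σ : ℝ := sl x / 2 with hσdef
  have hσ : 0 < σ := by rw [hσdef]; linarith
  set T₀ : ℝ := R / 2 with hT₀def
  have hT₀ : 0 < T₀ := by rw [hT₀def]; linarith
  set ε0 : ℝ := min (σ / 2) (R / 2) with hε0def
  have hε0 : 0 < ε0 := lt_min (by linarith) (by linarith)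
  set eps : ℕ → ℝ := fun n => ε0 / (n + 1) with hepsdef
  have hepspos : ∀ n, 0 < eps n := fun n => by
    rw [hepsdef]; positivity
  have hepsle : ∀ n, eps n ≤ ε0 := fun n => by
    rw [hepsdef]
    exact div_le_self hε0.le (by exact_mod_cast Nat.le_add_left 1 n)
  have heps0 : Tendsto eps atTop (𝓝 0) := by
    rw [hepsdef]
    have h := tendsto_one_div_add_atTop_nhds_zero_nat.const_mul ε0
    rw [mul_zero] at h
    refine h.congr (fun n => ?_)
    rw [mul_one_div]
  have H : ∀ n : ℕ, ∃ (m : ℕ) (z : ℕ → X), z 0 = x ∧ 0 < m ∧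
      (∀ k, dist x (z k) ≤ ∑ j ∈ Finset.range k, dist (z j) (z (j+1))) ∧
      (∀ k < m, 0 < dist (z k) (z (k+1)) ∧ dist (z k) (z (k+1)) ≤ eps n ∧
        ((locSlope f (z k)).toReal - eps n) * dist (z k) (z (k+1)) ≤ f (z k) - f (z (k+1))) ∧
      (∀ k < m, (∑ j ∈ Finset.range k, dist (z j) (z (j+1))) < R / 2) ∧
      R / 2 ≤ ∑ j ∈ Finset.range m, dist (z j) (z (j+1)) := by
    intro n
    refine chain_exists hf hfin hcont x hR hσ ?_ (hepspos n)
      ((hepsle n).trans (by rw [hε0def]; exact min_le_left _ _))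
      ((hepsle n).trans (by rw [hε0def]; exact min_le_right _ _))
    intro y hy
    rw [hslapp]
    exact hRball y hy
  choose m z hz0 hm0 hdistx hstep hlt hge using H
  -- simplify slope occurrences in hstep
  have hstep' : ∀ n k, k < m n → 0 < dist (z n k) (z n (k+1)) ∧ dist (z n k) (z n (k+1)) ≤ eps n ∧
      (sl (z n k) - eps n) * dist (z n k) (z n (k+1)) ≤ f (z n k) - f (z n (k+1)) := by
    intro n k hk
    have h := hstep n k hk
    rwa [hslapp] at h
  clear hstep
  set t : ℕ → ℕ → ℝ := fun n k => ∑ j ∈ Finset.range k, dist (z n j) (z n (j+1)) with htdef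
  have ht0 : ∀ n, t n 0 = 0 := fun n => by rw [htdef]; simp
  have htsucc : ∀ n k, t n (k+1) = t n k + dist (z n k) (z n (k+1)) := fun n k => by
    rw [htdef]; exact Finset.sum_range_succ _ _
  have htnn : ∀ n k, 0 ≤ t n k := fun n k => by
    rw [htdef]; exact Finset.sum_nonneg (fun j _ => dist_nonneg)
  have htmono : ∀ n, Monotone (t n) := by
    intro n i j hij
    rw [htdef]
    exact Finset.sum_le_sum_of_subset_of_nonneg (Finset.range_subset_range.2 hij)
      (fun k _ _ => dist_nonneg)
  have htel : ∀ n i j, i ≤ j → dist (z n i) (z n j) ≤ t n j - t n i := by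
    intro n i j hij
    induction j, hij using Nat.le_induction with
    | base => simp
    | succ j hij ih =>
        calc dist (z n i) (z n (j+1)) ≤ dist (z n i) (z n j) + dist (z n j) (z n (j+1)) :=
              dist_triangle _ _ _
          _ ≤ t n j - t n i + dist (z n j) (z n (j+1)) := by linarith
          _ = t n (j+1) - t n i := by rw [htsucc]; ring
  have hltT : ∀ n k, k < m n → t n k < T₀ := fun n k hk => by
    rw [htdef, hT₀def]; exact hlt n k hk
  have hgeT : ∀ n, T₀ ≤ t n (m n) := fun n => by
    rw [htdef, hT₀def]; exact hge n
  have hdistt : ∀ n k, dist x (z n k) ≤ t n k := fun n k => by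
    rw [htdef]; exact hdistx n k
  set J : ℕ → ℝ → ℕ := fun n u => Nat.findGreatest (fun k => t n k ≤ u) (m n) with hJdef
  have hJle : ∀ n u, J n u ≤ m n := fun n u => by simp only [hJdef]; exact Nat.findGreatest_le _
  have hJt : ∀ n u, 0 ≤ u → t n (J n u) ≤ u := by
    intro n u hu
    simp only [hJdef]
    exact Nat.findGreatest_spec (P := fun k => t n k ≤ u) (Nat.zero_le _)
      (show t n 0 ≤ u by rw [ht0]; exact hu)
  have hJ0 : ∀ n, J n 0 = 0 := by
    intro n
    simp only [hJdef]
    apply Nat.findGreatest_eq_zero_iff.2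
    intro k hk hkm hP
    have h1 : t n 1 ≤ t n k := htmono n hk
    have h2 : t n 1 = dist (z n 0) (z n 1) := by rw [htsucc, ht0]; ring
    have h3 := (hstep' n 0 (hm0 n)).1
    rw [h2] at h1
    linarith
  have hJlb : ∀ n u, 0 ≤ u → u ≤ T₀ → u - eps n ≤ t n (J n u) := by
    intro n u h0 hu
    rcases eq_or_lt_of_le (hJle n u) with heq | hlt2
    · have h1 : T₀ ≤ t n (m n) := hgeT n
      have h2 := hepspos n
      rw [heq]
      linarith
    · have hng : ¬ t n (J n u + 1) ≤ u := by
        simp only [hJdef]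
        exact Nat.findGreatest_is_greatest (by simp only [hJdef] at hlt2 ⊢; exact Nat.lt_succ_self _) hlt2
      push_neg at hng
      have h3 := (hstep' n (J n u) hlt2).2.1
      have h4 := htsucc n (J n u)
      linarith
  have hJmono : ∀ n u v, 0 ≤ u → u ≤ v → J n u ≤ J n v := by
    intro n u v h0 huv
    simp only [hJdef]
    exact Nat.le_findGreatest (hJle n u) ((hJt n u h0).trans huv)
  set cl : ℝ → ℝ := fun u => max 0 (min u T₀) with hcldef
  have hcl0 : ∀ u, 0 ≤ cl u := fun u => by rw [hcldef]; exact le_max_left _ _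
  have hclT : ∀ u, cl u ≤ T₀ := fun u => by
    rw [hcldef]; exact max_le hT₀.le (min_le_right _ _)
  have hclid : ∀ u, 0 ≤ u → u ≤ T₀ → cl u = u := fun u h1 h2 => by
    rw [hcldef]; simp only [min_eq_left h2, max_eq_right h1]
  have hcllip : ∀ u v, |cl u - cl v| ≤ |u - v| := by
    intro u v
    have e : ∀ w, cl w = max (min w T₀) 0 := fun w => by rw [hcldef, max_comm]
    rw [e u, e v]
    calc |max (min u T₀) 0 - max (min v T₀) 0| ≤ |min u T₀ - min v T₀| :=
          abs_max_sub_max_le_abs _ _ _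
      _ ≤ max |u - v| |T₀ - T₀| := abs_min_sub_min_le_max _ _ _ _
      _ ≤ |u - v| := by simp
  set g : ℕ → ℝ → X := fun n u => z n (J n (cl u)) with hgdef
  have hgapp : ∀ n u, g n u = z n (J n (cl u)) := fun n u => by rw [hgdef]
  have hgx : ∀ n u, dist x (g n u) ≤ cl u := by
    intro n u
    rw [hgapp]
    exact (hdistt n _).trans (hJt n _ (hcl0 u))
  have hg0 : ∀ n, g n 0 = x := by
    intro n
    rw [hgapp, hclid 0 le_rfl hT₀.le, hJ0 n, hz0 n]
  have hgdistuv : ∀ n u v, dist (g n u) (g n v) ≤ |u - v| + eps n := by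
    intro n u v
    have key : ∀ a b, 0 ≤ a → a ≤ b → b ≤ T₀ →
        dist (z n (J n a)) (z n (J n b)) ≤ b - a + eps n := by
      intro a b ha hab hb
      have h1 : J n a ≤ J n b := hJmono n a b ha hab
      calc dist (z n (J n a)) (z n (J n b)) ≤ t n (J n b) - t n (J n a) := htel n _ _ h1
        _ ≤ b - (a - eps n) := by
            have h2 := hJt n b (ha.trans hab)
            have h3 := hJlb n a ha (hab.trans hb)
            linarith
        _ = b - a + eps n := by ring
    have habs : ∀ u v : ℝ, cl v - cl u ≤ |u - v| := by
      intro u v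
      have h := hcllip v u
      have := le_abs_self (cl v - cl u)
      rw [abs_sub_comm u v]
      linarith
    rcases le_total (cl u) (cl v) with h | h
    · rw [hgapp, hgapp]
      calc dist (z n (J n (cl u))) (z n (J n (cl v))) ≤ cl v - cl u + eps n :=
            key _ _ (hcl0 u) h (hclT v)
        _ ≤ |u - v| + eps n := by linarith [habs u v]
    · rw [hgapp, hgapp, dist_comm]
      calc dist (z n (J n (cl v))) (z n (J n (cl u))) ≤ cl u - cl v + eps n :=
            key _ _ (hcl0 v) h (hclT u)
        _ ≤ |u - v| + eps n := by
            have := habs v u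
            rw [abs_sub_comm v u] at this
            linarith
  set U : Ultrafilter ℕ := Ultrafilter.of atTop with hUdef
  have hUle : (U : Filter ℕ) ≤ atTop := by rw [hUdef]; exact Ultrafilter.of_le _
  have hepsU : Tendsto eps (U : Filter ℕ) (𝓝 0) := heps0.mono_left hUle
  have hgK : ∀ u n, g n u ∈ Metric.closedBall x T₀ := by
    intro u n
    rw [Metric.mem_closedBall, dist_comm]
    exact (hgx n u).trans (hclT u)
  have hlimex : ∀ u : ℝ, ∃ y, y ∈ Metric.closedBall x T₀ ∧
      Tendsto (fun n => g n u) (U : Filter ℕ) (𝓝 y) := by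
    intro u
    obtain ⟨y, hy1, hy2⟩ := (isCompact_closedBall x T₀).ultrafilter_le_nhds
      (U.map fun n => g n u) (by
        rw [Ultrafilter.coe_map, Filter.le_principal_iff, Filter.mem_map]
        exact Filter.univ_mem' (fun n => hgK u n))
    refine ⟨y, hy1, ?_⟩
    rwa [Ultrafilter.coe_map] at hy2
  choose γ hγK hγlim using hlimex
  have hγ0 : γ 0 = x := by
    have h1 : Tendsto (fun n => g n 0) (U : Filter ℕ) (𝓝 x) := by
      have : (fun n => g n 0) = fun _ => x := funext hg0
      rw [this]; exact tendsto_const_nhds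
    exact tendsto_nhds_unique (hγlim 0) h1
  have hγlip : LipschitzWith 1 γ := by
    apply LipschitzWith.of_dist_le_mul
    intro u v
    rw [NNReal.coe_one, one_mul, Real.dist_eq]
    have h1 : Tendsto (fun n => dist (g n u) (g n v)) (U : Filter ℕ)
        (𝓝 (dist (γ u) (γ v))) := (hγlim u).dist (hγlim v)
    have h2 : Tendsto (fun n => |u - v| + eps n) (U : Filter ℕ) (𝓝 (|u - v|)) := by
      have h3 := hepsU.const_add (|u - v|)
      rwa [add_zero] at h3
    exact le_of_tendsto_of_tendsto' h1 h2 (fun n => hgdistuv n u v)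
  have hγlip1 : ∀ u v : ℝ, dist (γ u) (γ v) ≤ |u - v| := by
    intro u v
    have := hγlip.dist_le_mul u v
    rwa [NNReal.coe_one, one_mul, Real.dist_eq] at this
  -- uniform closeness along the ultrafilter
  have hclose : ∀ η : ℝ, 0 < η → ∀ᶠ n in (U : Filter ℕ),
      ∀ u, 0 ≤ u → u ≤ T₀ → dist (γ u) (g n u) ≤ η := by
    intro η hη
    have hq : 0 < η / 4 := by linarith
    set q : ℝ := η / 4 with hqdef
    set N : ℕ := ⌈T₀ / q⌉₊ with hNdef
    have hgrid : ∀ u, 0 ≤ u → u ≤ T₀ → ∃ i : ℕ, i ≤ N ∧ |u - i * q| ≤ q := by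
      intro u h0 hu
      refine ⟨⌊u / q⌋₊, ?_, ?_⟩
      · refine le_trans (Nat.floor_le_floor ?_) (Nat.floor_le_ceil _)
        gcongr
      · have h1 : (⌊u / q⌋₊ : ℝ) ≤ u / q := Nat.floor_le (by positivity)
        have h2 : u / q < ⌊u / q⌋₊ + 1 := Nat.lt_floor_add_one _
        have h1' : (⌊u / q⌋₊ : ℝ) * q ≤ u := (le_div_iff₀ hq).1 h1
        have h2' : u < ((⌊u / q⌋₊ : ℝ) + 1) * q := (div_lt_iff₀ hq).1 h2
        rw [abs_le]
        constructor
        · nlinarith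
        · nlinarith
    have e1 : ∀ᶠ n in (U : Filter ℕ),
        ∀ i ∈ Finset.range (N+1), dist (g n (i * q)) (γ (i * q)) < q := by
      rw [Filter.eventually_all_finset]
      intro i _
      exact Metric.tendsto_nhds.1 (hγlim ((i : ℝ) * q)) q hq
    have e2 : ∀ᶠ n in (U : Filter ℕ), eps n ≤ q := hepsU.eventually (eventually_le_nhds hq)
    filter_upwards [e1, e2] with n h1 h2 u h0 hu
    obtain ⟨i, hiN, hiq⟩ := hgrid u h0 hu
    have h1i := h1 i (Finset.mem_range.2 (Nat.lt_succ_of_le hiN))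
    have h3 : dist (g n ((i:ℝ)*q)) (g n u) ≤ |(i:ℝ)*q - u| + eps n := hgdistuv n _ _
    have h4 : dist (γ u) (γ ((i:ℝ)*q)) ≤ |u - (i:ℝ)*q| := hγlip1 _ _
    have habs : |(i:ℝ)*q - u| = |u - (i:ℝ)*q| := abs_sub_comm _ _
    calc dist (γ u) (g n u)
        ≤ dist (γ u) (γ ((i:ℝ)*q)) + dist (γ ((i:ℝ)*q)) (g n ((i:ℝ)*q))
            + dist (g n ((i:ℝ)*q)) (g n u) := dist_triangle4 _ _ _ _
      _ ≤ |u - (i:ℝ)*q| + q + (|(i:ℝ)*q - u| + eps n) := by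
          have h5 : dist (γ ((i:ℝ)*q)) (g n ((i:ℝ)*q)) ≤ q := by
            rw [dist_comm]; exact h1i.le
          exact add_le_add (add_le_add h4 h5) h3
      _ ≤ q + q + (q + q) := by
          rw [habs]
          have := hiq
          have := h2
          gcongr
      _ = η := by rw [hqdef]; ring
  have hslγ : Continuous fun u => sl (γ u) := hslc.comp hγlip.continuous
  have hA : ∀ a b : ℝ, a ≤ b → f (γ a) - f (γ b) ≤ ∫ u in a..b, sl (γ u) := by
    intro a b hab
    have h := descent_le_integral hf hfin hcont hγlip hab
    have he : (fun u => (locSlope f (γ u)).toReal) = fun u => sl (γ u) := by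
      funext u; rw [hslapp]
    rwa [he] at h
  obtain ⟨M, hM0, hMb⟩ : ∃ M, 0 ≤ M ∧ ∀ u, 0 ≤ u → u ≤ T₀ → sl (γ u) ≤ M := by
    obtain ⟨u₀, hu₀, hmax⟩ := isCompact_Icc.exists_isMaxOn (Set.nonempty_Icc.2 hT₀.le)
      hslγ.continuousOn
    exact ⟨sl (γ u₀), hsl0 _, fun u h0 hu => hmax (Set.mem_Icc.2 ⟨h0, hu⟩)⟩
  have hγball2 : ∀ u, 0 ≤ u → u ≤ T₀ → γ u ∈ Metric.closedBall x (T₀ + 2) := by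
    intro u h0 hu
    rw [Metric.mem_closedBall, dist_comm]
    have : dist (γ 0) (γ u) ≤ |(0:ℝ) - u| := hγlip1 0 u
    rw [hγ0] at this
    rw [abs_of_nonpos (by linarith)] at this
    simp only [neg_sub, sub_zero] at this
    linarith
  -- endpoint inequality
  have hE : (∫ u in (0:ℝ)..T₀, sl (γ u)) ≤ f x - f (γ T₀) := by
    refine le_of_forall_pos_le_add ?_
    intro δ hδ
    set δ1 : ℝ := δ / (4 * (T₀ + 1)) with hδ1def
    have hδ1 : 0 < δ1 := by rw [hδ1def]; positivity
    obtain ⟨η, hη, hmod⟩ : ∃ η > 0, ∀ a b : X, a ∈ Metric.closedBall x (T₀+2) →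
        b ∈ Metric.closedBall x (T₀+2) → dist a b < η → |sl a - sl b| < δ1 := by
      have hk2 := (isCompact_closedBall x (T₀+2)).uniformContinuousOn_of_continuous
        hslc.continuousOn
      rw [Metric.uniformContinuousOn_iff] at hk2
      obtain ⟨η, hη, h⟩ := hk2 δ1 hδ1
      refine ⟨η, hη, fun a b ha hb hd => ?_⟩
      rw [← Real.dist_eq]
      exact h a ha b hb hd
    have e1 := hclose (η/2) (by linarith)
    have e2 : ∀ᶠ n in (U : Filter ℕ), eps n < η/2 :=
      hepsU.eventually (eventually_lt_nhds (by linarith))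
    have e3 : ∀ᶠ n in (U : Filter ℕ), eps n * (T₀ + M) ≤ δ/4 := by
      have hlim : Tendsto (fun n => eps n * (T₀ + M)) (U : Filter ℕ) (𝓝 0) := by
        have := hepsU.mul_const (T₀ + M)
        rwa [zero_mul] at this
      exact hlim.eventually (eventually_le_nhds (by linarith))
    have e4 : ∀ᶠ n in (U : Filter ℕ), |f (g n T₀) - f (γ T₀)| < δ/4 := by
      have hft : Tendsto (fun n => f (g n T₀)) (U : Filter ℕ) (𝓝 (f (γ T₀))) :=
        (hf.tendsto _).comp (hγlim T₀)
      have h := Metric.tendsto_nhds.1 hft (δ/4) (by linarith)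
      filter_upwards [h] with n hn
      rwa [Real.dist_eq] at hn
    obtain ⟨n, ⟨⟨h1, h2⟩, h3, h4⟩⟩ := (((e1.and e2).and (e3.and e4))).exists
    set Jn : ℕ := J n T₀ with hJndef
    have hJnle : Jn ≤ m n := hJle n T₀
    have htJle : t n Jn ≤ T₀ := hJt n T₀ hT₀.le
    have htJge : T₀ - eps n ≤ t n Jn := hJlb n T₀ hT₀.le le_rfl
    have htJnn : 0 ≤ t n Jn := htnn n Jn
    have hzball2 : ∀ k, k ≤ Jn → z n k ∈ Metric.closedBall x (T₀+2) := by
      intro k hk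
      rw [Metric.mem_closedBall, dist_comm]
      have := (hdistt n k).trans ((htmono n hk).trans htJle)
      linarith
    have hgT : g n T₀ = z n Jn := by
      rw [hgapp, hclid T₀ hT₀.le le_rfl, hJndef]
    have hpiece : ∀ k, k < Jn →
        (∫ u in (t n k)..(t n (k+1)), sl (γ u)) ≤ (sl (z n k) + δ1) * dist (z n k) (z n (k+1)) := by
      intro k hk
      have hk1 : k + 1 ≤ Jn := hk
      have hkm : k < m n := lt_of_lt_of_le hk hJnle
      have hle : t n k ≤ t n (k+1) := htmono n (Nat.le_succ k)
      have hub : t n (k+1) ≤ T₀ := (htmono n hk1).trans htJle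
      have hlb : 0 ≤ t n k := htnn n k
      have hpoint : ∀ u ∈ Set.Icc (t n k) (t n (k+1)), sl (γ u) ≤ sl (z n k) + δ1 := by
        intro u hu
        have hu0 : 0 ≤ u := hlb.trans hu.1
        have huT : u ≤ T₀ := hu.2.trans hub
        have hcleq : cl u = u := hclid u hu0 huT
        have hdz : dist (z n (J n u)) (z n k) ≤ eps n := by
          have hdk := (hstep' n k hkm).2.1
          have hts := htsucc n k
          rcases le_total (J n u) k with hjk | hjk
          · have h5 := htel n _ _ hjk
            have h6 := hJlb n u hu0 huT
            have h7 := hu.1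
            linarith
          · have h5 := htel n _ _ hjk
            have h6 := hJt n u hu0
            have h8 := hu.2
            rw [dist_comm]
            linarith
        have hdistgu : dist (γ u) (z n k) < η := by
          have ha := h1 u hu0 huT
          have hb : dist (g n u) (z n k) = dist (z n (J n u)) (z n k) := by
            rw [hgapp, hcleq]
          calc dist (γ u) (z n k) ≤ dist (γ u) (g n u) + dist (g n u) (z n k) :=
                dist_triangle _ _ _
            _ ≤ η/2 + eps n := by rw [hb]; exact add_le_add ha hdz
            _ < η := by linarith
        have hmem1 := hγball2 u hu0 huT
        have hmem2 := hzball2 k hk.le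
        have habs2 := abs_lt.1 (hmod (γ u) (z n k) hmem1 hmem2 hdistgu)
        linarith [habs2.2]
      have hci : IntervalIntegrable (fun u => sl (γ u)) volume (t n k) (t n (k+1)) :=
        hslγ.intervalIntegrable _ _
      have hcc : IntervalIntegrable (fun _ : ℝ => sl (z n k) + δ1) volume (t n k) (t n (k+1)) :=
        intervalIntegrable_const
      calc (∫ u in (t n k)..(t n (k+1)), sl (γ u))
          ≤ ∫ _ in (t n k)..(t n (k+1)), (sl (z n k) + δ1) :=
            intervalIntegral.integral_mono_on hle hci hcc hpoint
        _ = (t n (k+1) - t n k) * (sl (z n k) + δ1) := by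
            rw [intervalIntegral.integral_const, smul_eq_mul]
        _ = (sl (z n k) + δ1) * dist (z n k) (z n (k+1)) := by
            rw [htsucc n k]; ring
    have hadj : ∀ k < Jn, IntervalIntegrable (fun u => sl (γ u)) volume (t n k) (t n (k+1)) :=
      fun k _ => hslγ.intervalIntegrable _ _
    have hsum1 : (∫ u in (0:ℝ)..(t n Jn), sl (γ u)) =
        ∑ k ∈ Finset.range Jn, ∫ u in (t n k)..(t n (k+1)), sl (γ u) := by
      have h := intervalIntegral.sum_integral_adjacent_intervals hadj
      rw [ht0 n] at h
      exact h.symm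
    have hsum2 : ∑ k ∈ Finset.range Jn, (∫ u in (t n k)..(t n (k+1)), sl (γ u)) ≤
        ∑ k ∈ Finset.range Jn, (sl (z n k) + δ1) * dist (z n k) (z n (k+1)) :=
      Finset.sum_le_sum (fun k hk => hpiece k (Finset.mem_range.1 hk))
    have hsum3 : ∑ k ∈ Finset.range Jn, (sl (z n k) + δ1) * dist (z n k) (z n (k+1)) =
        ∑ k ∈ Finset.range Jn, sl (z n k) * dist (z n k) (z n (k+1)) + δ1 * t n Jn := by
      rw [htdef]
      rw [Finset.mul_sum, ← Finset.sum_add_distrib]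
      exact Finset.sum_congr rfl (fun k _ => by ring)
    have hdesc : ∀ p, p ≤ m n →
        ∑ k ∈ Finset.range p, (sl (z n k) - eps n) * dist (z n k) (z n (k+1)) ≤
          f x - f (z n p) := by
      intro p hp
      induction p with
      | zero => simp [hz0 n]
      | succ p ih =>
          have hpm : p < m n := hp
          have hs := (hstep' n p hpm).2.2
          have hihp := ih hpm.le
          rw [Finset.sum_range_succ]
          linarith
    have hdescJ := hdesc Jn hJnle
    have hsum4 : ∑ k ∈ Finset.range Jn, (sl (z n k) - eps n) * dist (z n k) (z n (k+1)) =
        ∑ k ∈ Finset.range Jn, sl (z n k) * dist (z n k) (z n (k+1)) - eps n * t n Jn := by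
      rw [htdef]
      rw [Finset.mul_sum, ← Finset.sum_sub_distrib]
      exact Finset.sum_congr rfl (fun k _ => by ring)
    have htail : (∫ u in (t n Jn)..T₀, sl (γ u)) ≤ M * eps n := by
      calc (∫ u in (t n Jn)..T₀, sl (γ u)) ≤ ∫ _ in (t n Jn)..T₀, M :=
            intervalIntegral.integral_mono_on htJle (hslγ.intervalIntegrable _ _)
              intervalIntegrable_const
              (fun u hu => hMb u (htJnn.trans hu.1) hu.2)
        _ = (T₀ - t n Jn) * M := by rw [intervalIntegral.integral_const, smul_eq_mul]
        _ ≤ eps n * M := by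
            have : T₀ - t n Jn ≤ eps n := by linarith
            exact mul_le_mul_of_nonneg_right this hM0
        _ = M * eps n := mul_comm _ _
    have hsplit : (∫ u in (0:ℝ)..T₀, sl (γ u)) =
        (∫ u in (0:ℝ)..(t n Jn), sl (γ u)) + ∫ u in (t n Jn)..T₀, sl (γ u) :=
      (intervalIntegral.integral_add_adjacent_intervals (hslγ.intervalIntegrable _ _)
        (hslγ.intervalIntegrable _ _)).symm
    -- put it together
    have hb1 : (∫ u in (0:ℝ)..(t n Jn), sl (γ u)) ≤
        f x - f (z n Jn) + eps n * t n Jn + δ1 * t n Jn := by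
      rw [hsum1]
      calc ∑ k ∈ Finset.range Jn, (∫ u in (t n k)..(t n (k+1)), sl (γ u))
          ≤ ∑ k ∈ Finset.range Jn, sl (z n k) * dist (z n k) (z n (k+1)) + δ1 * t n Jn := by
            rw [← hsum3]; exact hsum2
        _ ≤ f x - f (z n Jn) + eps n * t n Jn + δ1 * t n Jn := by
            rw [hsum4] at hdescJ
            linarith
    have heps_n_nn := (hepspos n).le
    have hd1T : δ1 * t n Jn ≤ δ/4 := by
      have h5 : δ1 * t n Jn ≤ δ1 * (T₀ + 1) := by
        apply mul_le_mul_of_nonneg_left _ hδ1.le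
        linarith
      have h6 : δ1 * (T₀ + 1) = δ/4 := by
        rw [hδ1def]
        field_simp
      linarith
    have hepsT : eps n * t n Jn + M * eps n ≤ δ/4 := by
      have h5 : eps n * t n Jn ≤ eps n * T₀ := by
        apply mul_le_mul_of_nonneg_left _ heps_n_nn
        exact htJle
      have h6 : eps n * T₀ + M * eps n = eps n * (T₀ + M) := by ring
      linarith
    have hfend : f x - f (z n Jn) ≤ f x - f (γ T₀) + δ/4 := by
      rw [← hgT]
      have := abs_lt.1 h4
      linarith [this.1]
    rw [hsplit]
    calc (∫ u in (0:ℝ)..(t n Jn), sl (γ u)) + (∫ u in (t n Jn)..T₀, sl (γ u))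
        ≤ (f x - f (z n Jn) + eps n * t n Jn + δ1 * t n Jn) + M * eps n := by
          linarith [hb1, htail]
      _ ≤ f x - f (γ T₀) + δ := by linarith
  -- conclusion
  refine ⟨T₀, hT₀, γ, hγlip.lipschitzOnWith, hγ0, ?_⟩
  intro τ hτ
  have h1 := hA 0 τ hτ.1
  have h2 := hA τ T₀ hτ.2
  rw [hγ0] at h1
  have hadd : (∫ u in (0:ℝ)..τ, sl (γ u)) + (∫ u in τ..T₀, sl (γ u))
      = ∫ u in (0:ℝ)..T₀, sl (γ u) :=
    intervalIntegral.integral_add_adjacent_intervals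
      (hslγ.intervalIntegrable 0 τ) (hslγ.intervalIntegrable τ T₀)
  have hgoal : (∫ s in (0:ℝ)..τ, (locSlope f (γ s)).toReal) = ∫ u in (0:ℝ)..τ, sl (γ u) :=
    intervalIntegral.integral_congr (fun u _ => hslapp (γ u))
  rw [hgoal]
  linarith
end
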